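/- For every integer n ≥ 1, the matrices A_n and J_n commute (A_n J_n = J_n A_n), and A_n satisfies the relation A_n (A_n^{n+1} − 2 A_n^n − 2 J_n) = 0. -/

import Mathlib

open Matrix

/-- The paired tent map `T_κ : [-1,1] → [-1,1]`. -/
noncomputable def pairedTent (κ : ℝ) (x : ℝ) : ℝ :=
  if x ≤ -(1/2) then 2*(1+κ)*(x+1) - 1
  else if x < 0 then -(2*(1+κ))*x - 1
  else if x = 0 then 0
  else if x ≤ 1/2 then -(2*(1+κ))*x + 1
  else 2*(1+κ)*(x-1) + 1

/-- The partition points `p_0 < ⋯ < p_{2n+4}` of the Markov partition for `T_{κ_n}`. -/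
noncomputable def markovPoint (n : ℕ) (κ : ℝ) (i : ℕ) : ℝ :=
  if i = 0 then -1
  else if i < n then (2 + 2*κ)^i * κ - 1
  else if i = n then -(1/2)
  else if i = n + 1 then -κ
  else if i = n + 2 then 0
  else if i = n + 3 then κ
  else if i = n + 4 then 1/2
  else if i < 2*n + 4 then 1 - (2 + 2*κ)^(2*n + 4 - i) * κ
  else 1

/-- The interval `R_i = (p_{i-1}, p_i)`, for `1 ≤ i ≤ 2n+4`. -/
noncomputable def markovInterval (n : ℕ) (κ : ℝ) (i : ℕ) : Set ℝ :=
  Set.Ioo (markovPoint n κ (i - 1)) (markovPoint n κ i)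

open scoped Classical in
/-- The `(2n+4) × (2n+4)` adjacency matrix `A_n`: the `(i,j)` entry (1-based) is `1`
if `R_i ⊆ T_n(R_j)` and `0` otherwise. -/
noncomputable def Amat (n : ℕ) (κ : ℝ) : Matrix (Fin (2*n + 4)) (Fin (2*n + 4)) ℂ :=
  Matrix.of fun i j =>
    if markovInterval n κ ((i : ℕ) + 1) ⊆ pairedTent κ '' markovInterval n κ ((j : ℕ) + 1)
    then 1 else 0

/-- The `(2n+4) × (2n+4)` exchange matrix `J_n`: entry `(i,j)` (1-based) is `1` iff
`i + j = 2n+5`. -/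
def Jmat (n : ℕ) : Matrix (Fin (2*n + 4)) (Fin (2*n + 4)) ℂ :=
  Matrix.of fun i j => if (i : ℕ) + 1 + ((j : ℕ) + 1) = 2*n + 5 then 1 else 0

/-- 0-based lower row index of column `j` of the adjacency matrix. -/
def aIdx (n j : ℕ) : ℕ :=
  if n = 1 then (if j = 0 then 0 else if j = 1 then 3 else if j = 2 then 0
    else if j = 3 then 3 else 2)
  else if j = 0 then 0
  else if n = 2 ∧ j = 7 then 4
  else if j ≤ n - 3 then j + 1
  else if j = n - 2 then n - 1
  else if j = n - 1 then n + 2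
  else if j = n then 1
  else if j = n + 1 then 0
  else if j = n + 2 then 2*n + 3
  else if j = n + 3 then n + 1
  else if j = n + 4 then n + 1
  else if j = n + 5 then n + 2
  else if j ≤ 2*n + 2 then j - 1
  else 2*n + 2

/-- 0-based upper row index of column `j` of the adjacency matrix. -/
def bIdx (n j : ℕ) : ℕ :=
  if n = 1 then (if j = 0 then 3 else if j = 1 then 3 else if j = 2 then 2
    else if j = 3 then 5 else if j = 4 then 2 else 5)
  else if j = 0 then (if n = 2 then 3 else 1)
  else if n = 2 ∧ j = 7 then 7
  else if j ≤ n - 3 then j + 1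
  else if j = n - 2 then n + 1
  else if j = n - 1 then n + 2
  else if j = n then n + 2
  else if j = n + 1 then 0
  else if j = n + 2 then 2*n + 3
  else if j = n + 3 then 2*n + 2
  else if j = n + 4 then n + 1
  else if j = n + 5 then n + 4
  else if j ≤ 2*n + 2 then j - 1
  else 2*n + 3

noncomputable def Emat (n : ℕ) : Matrix (Fin (2*n + 4)) (Fin (2*n + 4)) ℂ :=
  Matrix.of fun i j => if aIdx n (j : ℕ) ≤ (i : ℕ) ∧ (i : ℕ) ≤ bIdx n (j : ℕ) then 1 else 0


lemma aIdx_zero (n : ℕ) (h0 : 3 ≤ n) : aIdx n 0 = 0 := by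
  simp only [aIdx, if_neg (show ¬ (n = 1) by omega),
    if_pos (show (0 = 0) by omega ), if_true]

lemma aIdx_lo (n : ℕ) (j : ℕ) (h0 : 2 ≤ n) (h1 : 1 ≤ j) (h2 : j ≤ n - 3) : aIdx n j = j + 1 := by
  simp only [aIdx, if_neg (show ¬ (n = 1) by omega),
    if_neg (show ¬ (j = 0) by omega),
    if_neg (show ¬ (n = 2 ∧ j = 7) by omega),
    if_pos (show (j ≤ n - 3) by omega ), if_true]

lemma aIdx_nm2 (n : ℕ) (h0 : 3 ≤ n) : aIdx n (n - 2) = n - 1 := by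
  simp only [aIdx, if_neg (show ¬ (n = 1) by omega),
    if_neg (show ¬ ((n - 2) = 0) by omega),
    if_neg (show ¬ (n = 2 ∧ (n - 2) = 7) by omega),
    if_neg (show ¬ ((n - 2) ≤ n - 3) by omega),
    if_pos (show ((n - 2) = n - 2) by omega ), if_true]

lemma aIdx_nm1 (n : ℕ) (h0 : 2 ≤ n) : aIdx n (n - 1) = n + 2 := by
  simp only [aIdx, if_neg (show ¬ (n = 1) by omega),
    if_neg (show ¬ ((n - 1) = 0) by omega),
    if_neg (show ¬ (n = 2 ∧ (n - 1) = 7) by omega),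
    if_neg (show ¬ ((n - 1) ≤ n - 3) by omega),
    if_neg (show ¬ ((n - 1) = n - 2) by omega),
    if_pos (show ((n - 1) = n - 1) by omega ), if_true]

lemma aIdx_nn (n : ℕ) (h0 : 2 ≤ n) : aIdx n n = 1 := by
  simp only [aIdx, if_neg (show ¬ (n = 1) by omega),
    if_neg (show ¬ (n = 0) by omega),
    if_neg (show ¬ (n = 2 ∧ n = 7) by omega),
    if_neg (show ¬ (n ≤ n - 3) by omega),
    if_neg (show ¬ (n = n - 2) by omega),
    if_neg (show ¬ (n = n - 1) by omega),
    if_pos (show (n = n) by omega ), if_true]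

lemma aIdx_np1 (n : ℕ) (h0 : 2 ≤ n) : aIdx n (n + 1) = 0 := by
  simp only [aIdx, if_neg (show ¬ (n = 1) by omega),
    if_neg (show ¬ ((n + 1) = 0) by omega),
    if_neg (show ¬ (n = 2 ∧ (n + 1) = 7) by omega),
    if_neg (show ¬ ((n + 1) ≤ n - 3) by omega),
    if_neg (show ¬ ((n + 1) = n - 2) by omega),
    if_neg (show ¬ ((n + 1) = n - 1) by omega),
    if_neg (show ¬ ((n + 1) = n) by omega),
    if_pos (show ((n + 1) = n + 1) by omega ), if_true]

lemma aIdx_np2 (n : ℕ) (h0 : 2 ≤ n) : aIdx n (n + 2) = 2*n + 3 := by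
  simp only [aIdx, if_neg (show ¬ (n = 1) by omega),
    if_neg (show ¬ ((n + 2) = 0) by omega),
    if_neg (show ¬ (n = 2 ∧ (n + 2) = 7) by omega),
    if_neg (show ¬ ((n + 2) ≤ n - 3) by omega),
    if_neg (show ¬ ((n + 2) = n - 2) by omega),
    if_neg (show ¬ ((n + 2) = n - 1) by omega),
    if_neg (show ¬ ((n + 2) = n) by omega),
    if_neg (show ¬ ((n + 2) = n + 1) by omega),
    if_pos (show ((n + 2) = n + 2) by omega ), if_true]

lemma aIdx_np3 (n : ℕ) (h0 : 2 ≤ n) : aIdx n (n + 3) = n + 1 := by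
  simp only [aIdx, if_neg (show ¬ (n = 1) by omega),
    if_neg (show ¬ ((n + 3) = 0) by omega),
    if_neg (show ¬ (n = 2 ∧ (n + 3) = 7) by omega),
    if_neg (show ¬ ((n + 3) ≤ n - 3) by omega),
    if_neg (show ¬ ((n + 3) = n - 2) by omega),
    if_neg (show ¬ ((n + 3) = n - 1) by omega),
    if_neg (show ¬ ((n + 3) = n) by omega),
    if_neg (show ¬ ((n + 3) = n + 1) by omega),
    if_neg (show ¬ ((n + 3) = n + 2) by omega),
    if_pos (show ((n + 3) = n + 3) by omega ), if_true]

lemma aIdx_np4 (n : ℕ) (h0 : 2 ≤ n) : aIdx n (n + 4) = n + 1 := by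
  simp only [aIdx, if_neg (show ¬ (n = 1) by omega),
    if_neg (show ¬ ((n + 4) = 0) by omega),
    if_neg (show ¬ (n = 2 ∧ (n + 4) = 7) by omega),
    if_neg (show ¬ ((n + 4) ≤ n - 3) by omega),
    if_neg (show ¬ ((n + 4) = n - 2) by omega),
    if_neg (show ¬ ((n + 4) = n - 1) by omega),
    if_neg (show ¬ ((n + 4) = n) by omega),
    if_neg (show ¬ ((n + 4) = n + 1) by omega),
    if_neg (show ¬ ((n + 4) = n + 2) by omega),
    if_neg (show ¬ ((n + 4) = n + 3) by omega),
    if_pos (show ((n + 4) = n + 4) by omega ), if_true]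

lemma aIdx_np5 (n : ℕ) (h0 : 3 ≤ n) : aIdx n (n + 5) = n + 2 := by
  simp only [aIdx, if_neg (show ¬ (n = 1) by omega),
    if_neg (show ¬ ((n + 5) = 0) by omega),
    if_neg (show ¬ (n = 2 ∧ (n + 5) = 7) by omega),
    if_neg (show ¬ ((n + 5) ≤ n - 3) by omega),
    if_neg (show ¬ ((n + 5) = n - 2) by omega),
    if_neg (show ¬ ((n + 5) = n - 1) by omega),
    if_neg (show ¬ ((n + 5) = n) by omega),
    if_neg (show ¬ ((n + 5) = n + 1) by omega),
    if_neg (show ¬ ((n + 5) = n + 2) by omega),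
    if_neg (show ¬ ((n + 5) = n + 3) by omega),
    if_neg (show ¬ ((n + 5) = n + 4) by omega),
    if_pos (show ((n + 5) = n + 5) by omega ), if_true]

lemma aIdx_hi (n : ℕ) (j : ℕ) (h0 : 2 ≤ n) (h1 : n + 6 ≤ j) (h2 : j ≤ 2*n + 2) : aIdx n j = j - 1 := by
  simp only [aIdx, if_neg (show ¬ (n = 1) by omega),
    if_neg (show ¬ (j = 0) by omega),
    if_neg (show ¬ (n = 2 ∧ j = 7) by omega),
    if_neg (show ¬ (j ≤ n - 3) by omega),
    if_neg (show ¬ (j = n - 2) by omega),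
    if_neg (show ¬ (j = n - 1) by omega),
    if_neg (show ¬ (j = n) by omega),
    if_neg (show ¬ (j = n + 1) by omega),
    if_neg (show ¬ (j = n + 2) by omega),
    if_neg (show ¬ (j = n + 3) by omega),
    if_neg (show ¬ (j = n + 4) by omega),
    if_neg (show ¬ (j = n + 5) by omega),
    if_pos (show (j ≤ 2*n + 2) by omega ), if_true]

lemma aIdx_top (n : ℕ) (h0 : 3 ≤ n) : aIdx n (2*n + 3) = 2*n + 2 := by
  simp only [aIdx, if_neg (show ¬ (n = 1) by omega),
    if_neg (show ¬ ((2*n + 3) = 0) by omega),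
    if_neg (show ¬ (n = 2 ∧ (2*n + 3) = 7) by omega),
    if_neg (show ¬ ((2*n + 3) ≤ n - 3) by omega),
    if_neg (show ¬ ((2*n + 3) = n - 2) by omega),
    if_neg (show ¬ ((2*n + 3) = n - 1) by omega),
    if_neg (show ¬ ((2*n + 3) = n) by omega),
    if_neg (show ¬ ((2*n + 3) = n + 1) by omega),
    if_neg (show ¬ ((2*n + 3) = n + 2) by omega),
    if_neg (show ¬ ((2*n + 3) = n + 3) by omega),
    if_neg (show ¬ ((2*n + 3) = n + 4) by omega),
    if_neg (show ¬ ((2*n + 3) = n + 5) by omega),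
    if_neg (show ¬ ((2*n + 3) ≤ 2*n + 2) by omega ), if_true]

lemma bIdx_zero (n : ℕ) (h0 : 3 ≤ n) : bIdx n 0 = 1 := by
  simp only [bIdx, if_neg (show ¬ (n = 1) by omega),
    if_pos (show (0 = 0) by omega ), if_true]
  simp only [if_neg (show ¬ (n = 2) by omega ), if_true]

lemma bIdx_lo (n : ℕ) (j : ℕ) (h0 : 2 ≤ n) (h1 : 1 ≤ j) (h2 : j ≤ n - 3) : bIdx n j = j + 1 := by
  simp only [bIdx, if_neg (show ¬ (n = 1) by omega),
    if_neg (show ¬ (j = 0) by omega),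
    if_neg (show ¬ (n = 2 ∧ j = 7) by omega),
    if_pos (show (j ≤ n - 3) by omega ), if_true]

lemma bIdx_nm2 (n : ℕ) (h0 : 3 ≤ n) : bIdx n (n - 2) = n + 1 := by
  simp only [bIdx, if_neg (show ¬ (n = 1) by omega),
    if_neg (show ¬ ((n - 2) = 0) by omega),
    if_neg (show ¬ (n = 2 ∧ (n - 2) = 7) by omega),
    if_neg (show ¬ ((n - 2) ≤ n - 3) by omega),
    if_pos (show ((n - 2) = n - 2) by omega ), if_true]

lemma bIdx_nm1 (n : ℕ) (h0 : 2 ≤ n) : bIdx n (n - 1) = n + 2 := by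
  simp only [bIdx, if_neg (show ¬ (n = 1) by omega),
    if_neg (show ¬ ((n - 1) = 0) by omega),
    if_neg (show ¬ (n = 2 ∧ (n - 1) = 7) by omega),
    if_neg (show ¬ ((n - 1) ≤ n - 3) by omega),
    if_neg (show ¬ ((n - 1) = n - 2) by omega),
    if_pos (show ((n - 1) = n - 1) by omega ), if_true]

lemma bIdx_nn (n : ℕ) (h0 : 2 ≤ n) : bIdx n n = n + 2 := by
  simp only [bIdx, if_neg (show ¬ (n = 1) by omega),
    if_neg (show ¬ (n = 0) by omega),
    if_neg (show ¬ (n = 2 ∧ n = 7) by omega),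
    if_neg (show ¬ (n ≤ n - 3) by omega),
    if_neg (show ¬ (n = n - 2) by omega),
    if_neg (show ¬ (n = n - 1) by omega),
    if_pos (show (n = n) by omega ), if_true]

lemma bIdx_np1 (n : ℕ) (h0 : 2 ≤ n) : bIdx n (n + 1) = 0 := by
  simp only [bIdx, if_neg (show ¬ (n = 1) by omega),
    if_neg (show ¬ ((n + 1) = 0) by omega),
    if_neg (show ¬ (n = 2 ∧ (n + 1) = 7) by omega),
    if_neg (show ¬ ((n + 1) ≤ n - 3) by omega),
    if_neg (show ¬ ((n + 1) = n - 2) by omega),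
    if_neg (show ¬ ((n + 1) = n - 1) by omega),
    if_neg (show ¬ ((n + 1) = n) by omega),
    if_pos (show ((n + 1) = n + 1) by omega ), if_true]

lemma bIdx_np2 (n : ℕ) (h0 : 2 ≤ n) : bIdx n (n + 2) = 2*n + 3 := by
  simp only [bIdx, if_neg (show ¬ (n = 1) by omega),
    if_neg (show ¬ ((n + 2) = 0) by omega),
    if_neg (show ¬ (n = 2 ∧ (n + 2) = 7) by omega),
    if_neg (show ¬ ((n + 2) ≤ n - 3) by omega),
    if_neg (show ¬ ((n + 2) = n - 2) by omega),
    if_neg (show ¬ ((n + 2) = n - 1) by omega),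
    if_neg (show ¬ ((n + 2) = n) by omega),
    if_neg (show ¬ ((n + 2) = n + 1) by omega),
    if_pos (show ((n + 2) = n + 2) by omega ), if_true]

lemma bIdx_np3 (n : ℕ) (h0 : 2 ≤ n) : bIdx n (n + 3) = 2*n + 2 := by
  simp only [bIdx, if_neg (show ¬ (n = 1) by omega),
    if_neg (show ¬ ((n + 3) = 0) by omega),
    if_neg (show ¬ (n = 2 ∧ (n + 3) = 7) by omega),
    if_neg (show ¬ ((n + 3) ≤ n - 3) by omega),
    if_neg (show ¬ ((n + 3) = n - 2) by omega),
    if_neg (show ¬ ((n + 3) = n - 1) by omega),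
    if_neg (show ¬ ((n + 3) = n) by omega),
    if_neg (show ¬ ((n + 3) = n + 1) by omega),
    if_neg (show ¬ ((n + 3) = n + 2) by omega),
    if_pos (show ((n + 3) = n + 3) by omega ), if_true]

lemma bIdx_np4 (n : ℕ) (h0 : 2 ≤ n) : bIdx n (n + 4) = n + 1 := by
  simp only [bIdx, if_neg (show ¬ (n = 1) by omega),
    if_neg (show ¬ ((n + 4) = 0) by omega),
    if_neg (show ¬ (n = 2 ∧ (n + 4) = 7) by omega),
    if_neg (show ¬ ((n + 4) ≤ n - 3) by omega),
    if_neg (show ¬ ((n + 4) = n - 2) by omega),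
    if_neg (show ¬ ((n + 4) = n - 1) by omega),
    if_neg (show ¬ ((n + 4) = n) by omega),
    if_neg (show ¬ ((n + 4) = n + 1) by omega),
    if_neg (show ¬ ((n + 4) = n + 2) by omega),
    if_neg (show ¬ ((n + 4) = n + 3) by omega),
    if_pos (show ((n + 4) = n + 4) by omega ), if_true]

lemma bIdx_np5 (n : ℕ) (h0 : 3 ≤ n) : bIdx n (n + 5) = n + 4 := by
  simp only [bIdx, if_neg (show ¬ (n = 1) by omega),
    if_neg (show ¬ ((n + 5) = 0) by omega),
    if_neg (show ¬ (n = 2 ∧ (n + 5) = 7) by omega),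
    if_neg (show ¬ ((n + 5) ≤ n - 3) by omega),
    if_neg (show ¬ ((n + 5) = n - 2) by omega),
    if_neg (show ¬ ((n + 5) = n - 1) by omega),
    if_neg (show ¬ ((n + 5) = n) by omega),
    if_neg (show ¬ ((n + 5) = n + 1) by omega),
    if_neg (show ¬ ((n + 5) = n + 2) by omega),
    if_neg (show ¬ ((n + 5) = n + 3) by omega),
    if_neg (show ¬ ((n + 5) = n + 4) by omega),
    if_pos (show ((n + 5) = n + 5) by omega ), if_true]

lemma bIdx_hi (n : ℕ) (j : ℕ) (h0 : 2 ≤ n) (h1 : n + 6 ≤ j) (h2 : j ≤ 2*n + 2) : bIdx n j = j - 1 := by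
  simp only [bIdx, if_neg (show ¬ (n = 1) by omega),
    if_neg (show ¬ (j = 0) by omega),
    if_neg (show ¬ (n = 2 ∧ j = 7) by omega),
    if_neg (show ¬ (j ≤ n - 3) by omega),
    if_neg (show ¬ (j = n - 2) by omega),
    if_neg (show ¬ (j = n - 1) by omega),
    if_neg (show ¬ (j = n) by omega),
    if_neg (show ¬ (j = n + 1) by omega),
    if_neg (show ¬ (j = n + 2) by omega),
    if_neg (show ¬ (j = n + 3) by omega),
    if_neg (show ¬ (j = n + 4) by omega),
    if_neg (show ¬ (j = n + 5) by omega),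
    if_pos (show (j ≤ 2*n + 2) by omega ), if_true]

lemma bIdx_top (n : ℕ) (h0 : 3 ≤ n) : bIdx n (2*n + 3) = 2*n + 3 := by
  simp only [bIdx, if_neg (show ¬ (n = 1) by omega),
    if_neg (show ¬ ((2*n + 3) = 0) by omega),
    if_neg (show ¬ (n = 2 ∧ (2*n + 3) = 7) by omega),
    if_neg (show ¬ ((2*n + 3) ≤ n - 3) by omega),
    if_neg (show ¬ ((2*n + 3) = n - 2) by omega),
    if_neg (show ¬ ((2*n + 3) = n - 1) by omega),
    if_neg (show ¬ ((2*n + 3) = n) by omega),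
    if_neg (show ¬ ((2*n + 3) = n + 1) by omega),
    if_neg (show ¬ ((2*n + 3) = n + 2) by omega),
    if_neg (show ¬ ((2*n + 3) = n + 3) by omega),
    if_neg (show ¬ ((2*n + 3) = n + 4) by omega),
    if_neg (show ¬ ((2*n + 3) = n + 5) by omega),
    if_neg (show ¬ ((2*n + 3) ≤ 2*n + 2) by omega ), if_true]

/-! ### Vector utilities -/

noncomputable def ivec (N s t : ℕ) : Fin N → ℂ :=
  fun i => if s ≤ (i : ℕ) ∧ (i : ℕ) ≤ t then 1 else 0

lemma mulVec_ivec_single (N : ℕ) (M : Matrix (Fin N) (Fin N) ℂ) (j : ℕ) (hj : j < N) :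
    M.mulVec (ivec N j j) = fun i => M i ⟨j, hj⟩ := by
  funext i
  show ∑ k : Fin N, M i k * ivec N j j k = _
  rw [Finset.sum_eq_single ⟨j, hj⟩]
  · simp [ivec]
  · intro b _ hb
    have hbj : (b : ℕ) ≠ j := fun h => hb (Fin.ext h)
    have : ivec N j j b = 0 := by simp only [ivec]; rw [if_neg (by omega)]
    rw [this, mul_zero]
  · intro h; exact absurd (Finset.mem_univ _) h

lemma Emat_col (n j : ℕ) (hj : j < 2*n+4) :
    (Emat n).mulVec (ivec (2*n+4) j j) = ivec (2*n+4) (aIdx n j) (bIdx n j) := by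
  rw [mulVec_ivec_single _ _ j hj]; funext i; rfl

lemma Jmat_col (n k : ℕ) (hk : k < 2*n+4) :
    (Jmat n).mulVec (ivec (2*n+4) k k) = ivec (2*n+4) (2*n+3-k) (2*n+3-k) := by
  rw [mulVec_ivec_single _ _ k hk]; funext i
  show (if (i:ℕ) + 1 + (k + 1) = 2*n+5 then (1:ℂ) else 0) = _
  have := i.isLt
  simp only [ivec]
  split_ifs with h1 h2 <;> first | rfl | omega

lemma ivec_split (N s t u : ℕ) (h1 : s ≤ t) (h2 : t < u) :
    ivec N s u = ivec N s t + ivec N (t+1) u := by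
  funext i
  simp only [ivec, Pi.add_apply]
  split_ifs <;> first | omega | norm_num

/-! ### bounds and symmetry of column data -/

lemma idx_region (n j : ℕ) (hn : 3 ≤ n) (hj : j ≤ 2*n+3) :
    j = 0 ∨ (1 ≤ j ∧ j ≤ n-3) ∨ j = n-2 ∨ j = n-1 ∨ j = n ∨ j = n+1 ∨ j = n+2 ∨ j = n+3
    ∨ j = n+4 ∨ j = n+5 ∨ (n+6 ≤ j ∧ j ≤ 2*n+2) ∨ j = 2*n+3 := by omega

lemma idx_bnd (n j : ℕ) (hn : 1 ≤ n) (hj : j ≤ 2*n+3) :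
    aIdx n j ≤ bIdx n j ∧ bIdx n j ≤ 2*n+3 := by
  obtain h1 | h2 | h3 : n = 1 ∨ n = 2 ∨ 3 ≤ n := by omega
  · subst h1; interval_cases j <;> constructor <;> decide
  · subst h2; interval_cases j <;> constructor <;> decide
  · rcases idx_region n j h3 hj with h|h|h|h|h|h|h|h|h|h|h|h
    · subst h; rw [aIdx_zero n h3, bIdx_zero n h3]; omega
    · rw [aIdx_lo n j (by omega) h.1 h.2, bIdx_lo n j (by omega) h.1 h.2]; omega
    · subst h; rw [aIdx_nm2 n h3, bIdx_nm2 n h3]; omega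
    · subst h; rw [aIdx_nm1 n (by omega), bIdx_nm1 n (by omega)]; omega
    · rw [h, aIdx_nn n (by omega), bIdx_nn n (by omega)]; omega
    · subst h; rw [aIdx_np1 n (by omega), bIdx_np1 n (by omega)]; omega
    · subst h; rw [aIdx_np2 n (by omega), bIdx_np2 n (by omega)]; omega
    · subst h; rw [aIdx_np3 n (by omega), bIdx_np3 n (by omega)]; omega
    · subst h; rw [aIdx_np4 n (by omega), bIdx_np4 n (by omega)]; omega
    · subst h; rw [aIdx_np5 n h3, bIdx_np5 n h3]; omega
    · rw [aIdx_hi n j (by omega) h.1 h.2, bIdx_hi n j (by omega) h.1 h.2]; omega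
    · subst h; rw [aIdx_top n h3, bIdx_top n h3]; omega

lemma idx_sym (n j : ℕ) (hn : 1 ≤ n) (hj : j ≤ 2*n+3) :
    aIdx n (2*n+3-j) = 2*n+3 - bIdx n j ∧ bIdx n (2*n+3-j) = 2*n+3 - aIdx n j := by
  obtain h1 | h2 | h3 : n = 1 ∨ n = 2 ∨ 3 ≤ n := by omega
  · subst h1; interval_cases j <;> constructor <;> decide
  · subst h2; interval_cases j <;> constructor <;> decide
  · rcases idx_region n j h3 hj with h|h|h|h|h|h|h|h|h|h|h|h
    · subst h
      have e : 2*n+3-0 = 2*n+3 := by omega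
      rw [e, aIdx_top n h3, bIdx_top n h3, aIdx_zero n h3, bIdx_zero n h3]; omega
    · have e : n+6 ≤ 2*n+3-j ∧ 2*n+3-j ≤ 2*n+2 := by omega
      rw [aIdx_hi n _ (by omega) e.1 e.2, bIdx_hi n _ (by omega) e.1 e.2,
        aIdx_lo n j (by omega) h.1 h.2, bIdx_lo n j (by omega) h.1 h.2]; omega
    · subst h
      have e : 2*n+3-(n-2) = n+5 := by omega
      rw [e, aIdx_np5 n h3, bIdx_np5 n h3, aIdx_nm2 n h3, bIdx_nm2 n h3]; omega
    · subst h
      have e : 2*n+3-(n-1) = n+4 := by omega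
      rw [e, aIdx_np4 n (by omega), bIdx_np4 n (by omega), aIdx_nm1 n (by omega),
        bIdx_nm1 n (by omega)]; omega
    · have e : 2*n+3-j = n+3 := by omega
      rw [e, h, aIdx_np3 n (by omega), bIdx_np3 n (by omega), aIdx_nn n (by omega),
        bIdx_nn n (by omega)]; omega
    · subst h
      have e : 2*n+3-(n+1) = n+2 := by omega
      rw [e, aIdx_np2 n (by omega), bIdx_np2 n (by omega), aIdx_np1 n (by omega),
        bIdx_np1 n (by omega)]; omega
    · subst h
      have e : 2*n+3-(n+2) = n+1 := by omega
      rw [e, aIdx_np1 n (by omega), bIdx_np1 n (by omega), aIdx_np2 n (by omega),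
        bIdx_np2 n (by omega)]; omega
    · subst h
      have e : 2*n+3-(n+3) = n := by omega
      rw [e, aIdx_nn n (by omega), bIdx_nn n (by omega), aIdx_np3 n (by omega),
        bIdx_np3 n (by omega)]; omega
    · subst h
      have e : 2*n+3-(n+4) = n-1 := by omega
      rw [e, aIdx_nm1 n (by omega), bIdx_nm1 n (by omega), aIdx_np4 n (by omega),
        bIdx_np4 n (by omega)]; omega
    · subst h
      have e : 2*n+3-(n+5) = n-2 := by omega
      rw [e, aIdx_nm2 n h3, bIdx_nm2 n h3, aIdx_np5 n h3, bIdx_np5 n h3]; omega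
    · have e1 : 1 ≤ 2*n+3-j ∧ 2*n+3-j ≤ n-3 := by omega
      rw [aIdx_lo n _ (by omega) e1.1 e1.2, bIdx_lo n _ (by omega) e1.1 e1.2,
        aIdx_hi n j (by omega) h.1 h.2, bIdx_hi n j (by omega) h.1 h.2]; omega
    · subst h
      have e : 2*n+3-(2*n+3) = 0 := by omega
      rw [e, aIdx_zero n h3, bIdx_zero n h3, aIdx_top n h3, bIdx_top n h3]; omega

/-! ### `E` and `J` commute -/

lemma Emat_Jmat_comm (n : ℕ) (hn : 1 ≤ n) : Emat n * Jmat n = Jmat n * Emat n := by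
  ext i j
  have hi : (i : ℕ) < 2*n+4 := i.isLt
  have hj : (j : ℕ) < 2*n+4 := j.isLt
  set jm : Fin (2*n+4) := ⟨2*n+3-(j:ℕ), by omega⟩ with hjm
  set im : Fin (2*n+4) := ⟨2*n+3-(i:ℕ), by omega⟩ with him
  have hjmv : (jm : ℕ) = 2*n+3-(j:ℕ) := rfl
  have himv : (im : ℕ) = 2*n+3-(i:ℕ) := rfl
  have key : Emat n i jm = Jmat n i im * Emat n im j := by
    have hJ2 : Jmat n i im = 1 := by
      show (if (i:ℕ) + 1 + ((im:ℕ) + 1) = 2*n+5 then (1:ℂ) else 0) = 1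
      rw [if_pos (by omega)]
    rw [hJ2, one_mul]
    show (if aIdx n (jm:ℕ) ≤ (i:ℕ) ∧ (i:ℕ) ≤ bIdx n (jm:ℕ) then (1:ℂ) else 0)
      = (if aIdx n (j:ℕ) ≤ (im:ℕ) ∧ (im:ℕ) ≤ bIdx n (j:ℕ) then (1:ℂ) else 0)
    rw [hjmv, himv]
    obtain ⟨s1, s2⟩ := idx_sym n j hn (by omega)
    obtain ⟨b1, b2⟩ := idx_bnd n j hn (by omega)
    rw [s1, s2]
    split_ifs <;> first | rfl | omega
  rw [Matrix.mul_apply, Matrix.mul_apply]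
  rw [Finset.sum_eq_single jm]
  · rw [Finset.sum_eq_single im]
    · have hJ1 : Jmat n jm j = 1 := by
        show (if (jm:ℕ) + 1 + ((j:ℕ) + 1) = 2*n+5 then (1:ℂ) else 0) = 1
        rw [if_pos (by omega)]
      rw [hJ1, mul_one]
      exact key
    · intro b _ hb
      have hbv : (b:ℕ) ≠ (im:ℕ) := fun hc => hb (Fin.ext hc)
      have : Jmat n i b = 0 := by
        show (if (i:ℕ) + 1 + ((b:ℕ) + 1) = 2*n+5 then (1:ℂ) else 0) = 0
        rw [if_neg (by omega)]
      rw [this, zero_mul]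
    · intro h; exact absurd (Finset.mem_univ _) h
  · intro b _ hb
    have hbv : (b:ℕ) ≠ (jm:ℕ) := fun hc => hb (Fin.ext hc)
    have : Jmat n b j = 0 := by
      show (if (b:ℕ) + 1 + ((j:ℕ) + 1) = 2*n+5 then (1:ℂ) else 0) = 0
      rw [if_neg (by omega)]
    rw [this, mul_zero]
  · intro h; exact absurd (Finset.mem_univ _) h

/-! ### named columns of `E`, `n ≥ 3` -/

section Columns
variable (n : ℕ)

lemma col_zero (hn : 3 ≤ n) :
    (Emat n).mulVec (ivec (2*n+4) 0 0) = ivec (2*n+4) 0 1 := by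
  rw [Emat_col n 0 (by omega), aIdx_zero n hn, bIdx_zero n hn]

lemma col_lo (j : ℕ) (hn : 3 ≤ n) (h1 : 1 ≤ j) (h2 : j ≤ n-3) :
    (Emat n).mulVec (ivec (2*n+4) j j) = ivec (2*n+4) (j+1) (j+1) := by
  rw [Emat_col n j (by omega), aIdx_lo n j (by omega) h1 h2, bIdx_lo n j (by omega) h1 h2]

lemma col_nm2 (hn : 3 ≤ n) :
    (Emat n).mulVec (ivec (2*n+4) (n-2) (n-2)) = ivec (2*n+4) (n-1) (n+1) := by
  rw [Emat_col n (n-2) (by omega), aIdx_nm2 n hn, bIdx_nm2 n hn]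

lemma col_nm1 (hn : 3 ≤ n) :
    (Emat n).mulVec (ivec (2*n+4) (n-1) (n-1)) = ivec (2*n+4) (n+2) (n+2) := by
  rw [Emat_col n (n-1) (by omega), aIdx_nm1 n (by omega), bIdx_nm1 n (by omega)]

lemma col_n (hn : 3 ≤ n) :
    (Emat n).mulVec (ivec (2*n+4) n n) = ivec (2*n+4) 1 (n+2) := by
  rw [Emat_col n n (by omega), aIdx_nn n (by omega), bIdx_nn n (by omega)]

lemma col_np1 (hn : 3 ≤ n) :
    (Emat n).mulVec (ivec (2*n+4) (n+1) (n+1)) = ivec (2*n+4) 0 0 := by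
  rw [Emat_col n (n+1) (by omega), aIdx_np1 n (by omega), bIdx_np1 n (by omega)]

lemma col_np2 (hn : 3 ≤ n) :
    (Emat n).mulVec (ivec (2*n+4) (n+2) (n+2)) = ivec (2*n+4) (2*n+3) (2*n+3) := by
  rw [Emat_col n (n+2) (by omega), aIdx_np2 n (by omega), bIdx_np2 n (by omega)]

lemma col_np3 (hn : 3 ≤ n) :
    (Emat n).mulVec (ivec (2*n+4) (n+3) (n+3)) = ivec (2*n+4) (n+1) (2*n+2) := by
  rw [Emat_col n (n+3) (by omega), aIdx_np3 n (by omega), bIdx_np3 n (by omega)]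

lemma col_np4 (hn : 3 ≤ n) :
    (Emat n).mulVec (ivec (2*n+4) (n+4) (n+4)) = ivec (2*n+4) (n+1) (n+1) := by
  rw [Emat_col n (n+4) (by omega), aIdx_np4 n (by omega), bIdx_np4 n (by omega)]

lemma col_np5 (hn : 3 ≤ n) :
    (Emat n).mulVec (ivec (2*n+4) (n+5) (n+5)) = ivec (2*n+4) (n+2) (n+4) := by
  rw [Emat_col n (n+5) (by omega), aIdx_np5 n hn, bIdx_np5 n hn]

lemma col_hi (j : ℕ) (hn : 3 ≤ n) (h1 : n+6 ≤ j) (h2 : j ≤ 2*n+2) :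
    (Emat n).mulVec (ivec (2*n+4) j j) = ivec (2*n+4) (j-1) (j-1) := by
  rw [Emat_col n j (by omega), aIdx_hi n j (by omega) h1 h2, bIdx_hi n j (by omega) h1 h2]

lemma col_top (hn : 3 ≤ n) :
    (Emat n).mulVec (ivec (2*n+4) (2*n+3) (2*n+3)) = ivec (2*n+4) (2*n+2) (2*n+3) := by
  rw [Emat_col n (2*n+3) (by omega), aIdx_top n hn, bIdx_top n hn]

/-! ### action of `E` on index-interval vectors, `n ≥ 3` -/

lemma chainL (hn : 3 ≤ n) : ∀ t, t ≤ n-3 →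
    (Emat n).mulVec (ivec (2*n+4) 0 t) = ivec (2*n+4) 0 (t+1) := by
  intro t
  induction t with
  | zero => intro _; exact col_zero n hn
  | succ t ih =>
    intro ht
    rw [ivec_split (2*n+4) 0 t (t+1) (by omega) (by omega), Matrix.mulVec_add,
      ih (by omega), col_lo n (t+1) hn (by omega) (by omega),
      ← ivec_split (2*n+4) 0 (t+1) (t+2) (by omega) (by omega)]

lemma chainR (hn : 3 ≤ n) : ∀ t, t ≤ n-3 →
    (Emat n).mulVec (ivec (2*n+4) (2*n+3-t) (2*n+3)) = ivec (2*n+4) (2*n+2-t) (2*n+3) := by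
  intro t
  induction t with
  | zero => intro _; exact col_top n hn
  | succ t ih =>
    intro ht
    have e1 : 2*n+3-(t+1) = 2*n+2-t := by omega
    have e2 : 2*n+2-t+1 = 2*n+3-t := by omega
    have e3 : 2*n+2-(t+1) = 2*n+1-t := by omega
    have e4 : 2*n+1-t+1 = 2*n+2-t := by omega
    have e5 : 2*n+2-t-1 = 2*n+1-t := by omega
    rw [e1, e3, ivec_split (2*n+4) (2*n+2-t) (2*n+2-t) (2*n+3) (by omega) (by omega), e2,
      Matrix.mulVec_add, ih (by omega),
      col_hi n (2*n+2-t) hn (by omega) (by omega), e5,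
      ← e4, ← ivec_split (2*n+4) (2*n+1-t) (2*n+1-t) (2*n+3) (by omega) (by omega)]

lemma S2 (hn : 3 ≤ n) :
    (Emat n).mulVec (ivec (2*n+4) 0 (n-2)) = ivec (2*n+4) 0 (n+1) := by
  have e1 : n-3+1 = n-2 := by omega
  have e2 : n-2+1 = n-1 := by omega
  rw [ivec_split (2*n+4) 0 (n-3) (n-2) (by omega) (by omega), e1, Matrix.mulVec_add,
    chainL n hn (n-3) (by omega), e1, col_nm2 n hn,
    ← e2, ← ivec_split (2*n+4) 0 (n-2) (n+1) (by omega) (by omega)]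

lemma S3 (hn : 3 ≤ n) :
    (Emat n).mulVec (ivec (2*n+4) 0 (n+1)) = (2:ℂ) • ivec (2*n+4) 0 (n+2) := by
  have e2 : n-2+1 = n-1 := by omega
  have e3 : n-1+1 = n := by omega
  rw [ivec_split (2*n+4) 0 (n-2) (n+1) (by omega) (by omega), e2,
    ivec_split (2*n+4) (n-1) (n-1) (n+1) (by omega) (by omega), e3,
    ivec_split (2*n+4) n n (n+1) (by omega) (by omega),
    Matrix.mulVec_add, Matrix.mulVec_add, Matrix.mulVec_add,
    S2 n hn, col_nm1 n hn, col_n n hn, col_np1 n hn]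
  funext i
  simp only [ivec, Pi.add_apply, Pi.smul_apply, smul_eq_mul]
  split_ifs <;> first | omega | norm_num

lemma S4 (hn : 3 ≤ n) :
    (Emat n).mulVec (ivec (2*n+4) 0 (n+2))
      = (2:ℂ) • ivec (2*n+4) 0 (n+2) + ivec (2*n+4) (2*n+3) (2*n+3) := by
  have hs : ivec (2*n+4) 0 (n+2) = ivec (2*n+4) 0 (n+1) + ivec (2*n+4) (n+2) (n+2) := by
    have e : n+1+1 = n+2 := by omega
    rw [ivec_split (2*n+4) 0 (n+1) (n+2) (by omega) (by omega), e]
  conv_lhs => rw [hs]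
  rw [Matrix.mulVec_add, S3 n hn, col_np2 n hn]

lemma S9 (hn : 3 ≤ n) :
    (Emat n).mulVec (ivec (2*n+4) (n-1) (n+1))
      = ivec (2*n+4) 0 (n+2) + ivec (2*n+4) (n+2) (n+2) := by
  have e3 : n-1+1 = n := by omega
  rw [ivec_split (2*n+4) (n-1) (n-1) (n+1) (by omega) (by omega), e3,
    ivec_split (2*n+4) n n (n+1) (by omega) (by omega),
    Matrix.mulVec_add, Matrix.mulVec_add, col_nm1 n hn, col_n n hn, col_np1 n hn]
  funext i
  simp only [ivec, Pi.add_apply]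
  split_ifs <;> first | omega | norm_num

lemma S2' (hn : 3 ≤ n) :
    (Emat n).mulVec (ivec (2*n+4) (n+5) (2*n+3)) = ivec (2*n+4) (n+2) (2*n+3) := by
  have e1 : 2*n+3-(n-3) = n+6 := by omega
  have e2 : 2*n+2-(n-3) = n+5 := by omega
  have h := chainR n hn (n-3) (by omega)
  rw [e1, e2] at h
  rw [ivec_split (2*n+4) (n+5) (n+5) (2*n+3) (by omega) (by omega), Matrix.mulVec_add,
    col_np5 n hn, h, ← ivec_split (2*n+4) (n+2) (n+4) (2*n+3) (by omega) (by omega)]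

lemma S3' (hn : 3 ≤ n) :
    (Emat n).mulVec (ivec (2*n+4) (n+2) (2*n+3)) = (2:ℂ) • ivec (2*n+4) (n+1) (2*n+3) := by
  rw [ivec_split (2*n+4) (n+2) (n+2) (2*n+3) (by omega) (by omega),
    ivec_split (2*n+4) (n+3) (n+3) (2*n+3) (by omega) (by omega),
    ivec_split (2*n+4) (n+4) (n+4) (2*n+3) (by omega) (by omega),
    Matrix.mulVec_add, Matrix.mulVec_add, Matrix.mulVec_add,
    col_np2 n hn, col_np3 n hn, col_np4 n hn, S2' n hn]
  funext i
  simp only [ivec, Pi.add_apply, Pi.smul_apply, smul_eq_mul]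
  split_ifs <;> first | omega | norm_num

lemma S4' (hn : 3 ≤ n) :
    (Emat n).mulVec (ivec (2*n+4) (n+1) (2*n+3))
      = (2:ℂ) • ivec (2*n+4) (n+1) (2*n+3) + ivec (2*n+4) 0 0 := by
  have hs : ivec (2*n+4) (n+1) (2*n+3)
      = ivec (2*n+4) (n+1) (n+1) + ivec (2*n+4) (n+2) (2*n+3) := by
    have e : n+1+1 = n+2 := by omega
    rw [ivec_split (2*n+4) (n+1) (n+1) (2*n+3) (by omega) (by omega), e]
  conv_lhs => rw [hs]
  rw [Matrix.mulVec_add, col_np1 n hn, S3' n hn, hs]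
  module

end Columns

/-! ### iterates, `n ≥ 3` -/

section Iterates
variable (n : ℕ)

lemma powStep (m : ℕ) (v : Fin (2*n+4) → ℂ) :
    (Emat n ^ (m+1)).mulVec v = (Emat n).mulVec ((Emat n ^ m).mulVec v) := by
  rw [pow_succ', Matrix.mulVec_mulVec]

lemma powStepR (m : ℕ) (v : Fin (2*n+4) → ℂ) :
    (Emat n ^ (m+1)).mulVec v = (Emat n ^ m).mulVec ((Emat n).mulVec v) := by
  rw [pow_succ, Matrix.mulVec_mulVec]

lemma powStep' (m : ℕ) (h : 1 ≤ m) (v : Fin (2*n+4) → ℂ) :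
    (Emat n ^ m).mulVec v = (Emat n).mulVec ((Emat n ^ (m-1)).mulVec v) := by
  obtain ⟨k, rfl⟩ : ∃ k, m = k+1 := ⟨m-1, by omega⟩
  rw [powStep, Nat.add_sub_cancel]

lemma iterL (hn : 3 ≤ n) : ∀ t, 1 ≤ t → t ≤ n-2 →
    (Emat n ^ t).mulVec (ivec (2*n+4) 0 0) = ivec (2*n+4) 0 t := by
  intro t
  induction t with
  | zero => omega
  | succ t ih =>
    intro _ ht
    rcases Nat.eq_zero_or_pos t with h0 | h1
    · subst h0
      rw [pow_one]
      exact col_zero n hn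
    · rw [powStep, ih (by omega) (by omega), chainL n hn t (by omega)]

lemma iterR (hn : 3 ≤ n) : ∀ t, 1 ≤ t → t ≤ n-2 →
    (Emat n ^ t).mulVec (ivec (2*n+4) (2*n+3) (2*n+3)) = ivec (2*n+4) (2*n+3-t) (2*n+3) := by
  intro t
  induction t with
  | zero => omega
  | succ t ih =>
    intro _ ht
    rcases Nat.eq_zero_or_pos t with h0 | h1
    · subst h0
      rw [pow_one]
      have := col_top n hn
      have e : 2*n+3-1 = 2*n+2 := by omega
      rw [e]; exact this
    · have e : 2*n+3-(t+1) = 2*n+2-t := by omega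
      rw [powStep, ih (by omega) (by omega), chainR n hn t (by omega), e]

lemma iterL_nm1 (hn : 3 ≤ n) :
    (Emat n ^ (n-1)).mulVec (ivec (2*n+4) 0 0) = ivec (2*n+4) 0 (n+1) := by
  have e : n-1-1 = n-2 := by omega
  rw [powStep' n (n-1) (by omega), e, iterL n hn (n-2) (by omega) (by omega), S2 n hn]

lemma iterL_n (hn : 3 ≤ n) :
    (Emat n ^ n).mulVec (ivec (2*n+4) 0 0) = (2:ℂ) • ivec (2*n+4) 0 (n+2) := by
  have e : n-1 = n-1 := rfl
  rw [powStep' n n (by omega), iterL_nm1 n hn, S3 n hn]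

lemma iterL_np1 (hn : 3 ≤ n) :
    (Emat n ^ (n+1)).mulVec (ivec (2*n+4) 0 0)
      = (2:ℂ) • ((2:ℂ) • ivec (2*n+4) 0 (n+2) + ivec (2*n+4) (2*n+3) (2*n+3)) := by
  rw [powStep, iterL_n n hn, Matrix.mulVec_smul, S4 n hn]

lemma iterR_nm1 (hn : 3 ≤ n) :
    (Emat n ^ (n-1)).mulVec (ivec (2*n+4) (2*n+3) (2*n+3)) = ivec (2*n+4) (n+2) (2*n+3) := by
  have e : n-1-1 = n-2 := by omega
  have e2 : 2*n+3-(n-2) = n+5 := by omega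
  rw [powStep' n (n-1) (by omega), e, iterR n hn (n-2) (by omega) (by omega), e2, S2' n hn]

lemma iterR_n (hn : 3 ≤ n) :
    (Emat n ^ n).mulVec (ivec (2*n+4) (2*n+3) (2*n+3)) = (2:ℂ) • ivec (2*n+4) (n+1) (2*n+3) := by
  rw [powStep' n n (by omega), iterR_nm1 n hn, S3' n hn]

end Iterates

/-! ### the key per-column identity, `n ≥ 3` -/

section MainCol
variable (n : ℕ)

def colGoal (n : ℕ) (j : ℕ) : Prop :=
  (Emat n ^ (n+2)).mulVec (ivec (2*n+4) j j)
    = (2:ℂ) • (Emat n ^ (n+1)).mulVec (ivec (2*n+4) j j)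
      + (2:ℂ) • (Emat n).mulVec (ivec (2*n+4) (2*n+3-j) (2*n+3-j))

lemma case_zero (hn : 3 ≤ n) : colGoal n 0 := by
  unfold colGoal
  have e : 2*n+3-0 = 2*n+3 := by omega
  rw [e, powStep, iterL_np1 n hn, Matrix.mulVec_smul, Matrix.mulVec_add,
    Matrix.mulVec_smul, S4 n hn, col_top n hn]
  module

lemma case_np1 (hn : 3 ≤ n) : colGoal n (n+1) := by
  unfold colGoal
  have e : 2*n+3-(n+1) = n+2 := by omega
  rw [e, powStepR, col_np1 n hn, iterL_np1 n hn,
    powStepR, col_np1 n hn, iterL_n n hn, col_np2 n hn]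
  module

lemma case_nm1 (hn : 3 ≤ n) : colGoal n (n-1) := by
  unfold colGoal
  have e : 2*n+3-(n-1) = n+4 := by omega
  have h1 : (Emat n ^ (n+1)).mulVec (ivec (2*n+4) (n-1) (n-1))
      = ivec (2*n+4) (n+2) (2*n+3) := by
    have e2 : n+1 = (n-1)+1+1 := by omega
    rw [e2, powStepR, col_nm1 n hn, powStepR, col_np2 n hn, iterR_nm1 n hn]
  have h2 : (Emat n ^ (n+2)).mulVec (ivec (2*n+4) (n-1) (n-1))
      = (2:ℂ) • ivec (2*n+4) (n+1) (2*n+3) := by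
    have e2 : n+2 = (n-1)+1+1+1 := by omega
    rw [e2, powStepR, col_nm1 n hn, powStepR, col_np2 n hn]
    have e3 : (n-1)+1 = n := by omega
    rw [e3, iterR_n n hn]
  rw [e, h1, h2, col_np4 n hn]
  have hs : ivec (2*n+4) (n+1) (2*n+3)
      = ivec (2*n+4) (n+1) (n+1) + ivec (2*n+4) (n+2) (2*n+3) := by
    have e4 : n+1+1 = n+2 := by omega
    rw [ivec_split (2*n+4) (n+1) (n+1) (2*n+3) (by omega) (by omega), e4]
  rw [hs]
  module

lemma case_n (hn : 3 ≤ n) : colGoal n n := by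
  unfold colGoal
  have e : 2*n+3-n = n+3 := by omega
  have h1 : (Emat n ^ (n+2)).mulVec (ivec (2*n+4) n n)
      = (Emat n ^ (n+1)).mulVec (ivec (2*n+4) 1 (n+2)) := by
    rw [show n+2 = (n+1)+1 from rfl, powStepR, col_n n hn]
  have h2 : (Emat n ^ (n+1)).mulVec (ivec (2*n+4) n n)
      = (Emat n ^ n).mulVec (ivec (2*n+4) 1 (n+2)) := by
    rw [powStepR, col_n n hn]
  rw [e, h1, h2, col_np3 n hn]
  -- now: (E^(n+1)) (ivec 1 (n+2)) = 2 • (E^n) (ivec 1 (n+2)) + 2 • ivec (n+1) (2n+2)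
  have hsplit : ivec (2*n+4) 0 (n+2) = ivec (2*n+4) 0 0 + ivec (2*n+4) 1 (n+2) :=
    ivec_split (2*n+4) 0 0 (n+2) (by omega) (by omega)
  have key : (Emat n ^ (n+1)).mulVec (ivec (2*n+4) 0 (n+2))
      = (2:ℂ) • (Emat n ^ n).mulVec (ivec (2*n+4) 0 (n+2))
        + (2:ℂ) • ivec (2*n+4) (n+1) (2*n+3) := by
    rw [powStepR, S4 n hn, Matrix.mulVec_add, Matrix.mulVec_smul, iterR_n n hn]
  rw [hsplit, Matrix.mulVec_add, Matrix.mulVec_add, iterL_np1 n hn, iterL_n n hn] at key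
  have hw : ivec (2*n+4) (n+1) (2*n+3)
      = ivec (2*n+4) (n+1) (2*n+2) + ivec (2*n+4) (2*n+3) (2*n+3) := by
    have e4 : 2*n+2+1 = 2*n+3 := by omega
    rw [ivec_split (2*n+4) (n+1) (2*n+2) (2*n+3) (by omega) (by omega), e4]
  rw [hw] at key
  -- linear algebra from key
  have goal' := key
  apply_fun (fun x => x - ((2:ℂ) • ((2:ℂ) • ivec (2*n+4) 0 (n+2)
    + ivec (2*n+4) (2*n+3) (2*n+3)))) at goal'
  calc (Emat n ^ (n+1)).mulVec (ivec (2*n+4) 1 (n+2))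
      = (2:ℂ) • ((2:ℂ) • ivec (2*n+4) 0 (n+2) + ivec (2*n+4) (2*n+3) (2*n+3))
          + (Emat n ^ (n+1)).mulVec (ivec (2*n+4) 1 (n+2))
        - (2:ℂ) • ((2:ℂ) • ivec (2*n+4) 0 (n+2) + ivec (2*n+4) (2*n+3) (2*n+3)) := by module
    _ = (2:ℂ) • ((2:ℂ) • ivec (2*n+4) 0 (n+2) + (Emat n ^ n).mulVec (ivec (2*n+4) 1 (n+2)))
          + ((2:ℂ) • (ivec (2*n+4) (n+1) (2*n+2) + ivec (2*n+4) (2*n+3) (2*n+3)))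
        - (2:ℂ) • ((2:ℂ) • ivec (2*n+4) 0 (n+2) + ivec (2*n+4) (2*n+3) (2*n+3)) := by
        rw [← key]
    _ = (2:ℂ) • (Emat n ^ n).mulVec (ivec (2*n+4) 1 (n+2))
          + (2:ℂ) • ivec (2*n+4) (n+1) (2*n+2) := by module

lemma case_mid (hn : 3 ≤ n) (j : ℕ) (h1 : 1 ≤ j) (h2 : j ≤ n-2) : colGoal n j := by
  unfold colGoal
  -- chain down to column n-2
  have chainJ : ∀ d, d ≤ n-3 → ∀ j', j' = n-2-d →
      (Emat n ^ d).mulVec (ivec (2*n+4) j' j') = ivec (2*n+4) (n-2) (n-2) := by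
    intro d
    induction d with
    | zero =>
      intro _ j' hj'
      have : j' = n-2 := by omega
      rw [this, pow_zero, Matrix.one_mulVec]
    | succ d ih =>
      intro hd j' hj'
      rw [powStepR, col_lo n j' hn (by omega) (by omega)]
      exact ih (by omega) (j'+1) (by omega)
  have st2 : (Emat n ^ (n-1-j)).mulVec (ivec (2*n+4) j j) = ivec (2*n+4) (n-1) (n+1) := by
    have e : n-1-j-1 = n-2-j := by omega
    rw [powStep' n (n-1-j) (by omega), e, chainJ (n-2-j) (by omega) j (by omega), col_nm2 n hn]
  have st3 : (Emat n ^ (n-j)).mulVec (ivec (2*n+4) j j)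
      = ivec (2*n+4) 0 (n+2) + ivec (2*n+4) (n+2) (n+2) := by
    have e : n-j-1 = n-1-j := by omega
    rw [powStep' n (n-j) (by omega), e, st2, S9 n hn]
  -- key reduction : (E^(j+1)) c = (E^j) c + col (2n+3-j)
  have hc : (Emat n ^ (j+1)).mulVec (ivec (2*n+4) (2*n+3) (2*n+3))
      = (Emat n ^ j).mulVec (ivec (2*n+4) (2*n+3) (2*n+3))
        + (Emat n).mulVec (ivec (2*n+4) (2*n+3-j) (2*n+3-j)) := by
    rcases Nat.lt_or_ge j (n-2) with hj3 | hj3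
    · -- j ≤ n-3
      have e1 : 2*n+3-(j+1) = 2*n+2-j := by omega
      have e2 : 2*n+2-j+1 = 2*n+3-j := by omega
      have e3 : 2*n+3-j-1 = 2*n+2-j := by omega
      rw [iterR n hn (j+1) (by omega) (by omega), iterR n hn j (by omega) (by omega),
        col_hi n (2*n+3-j) hn (by omega) (by omega), e1, e3,
        ivec_split (2*n+4) (2*n+2-j) (2*n+2-j) (2*n+3) (by omega) (by omega), e2]
      abel
    · -- j = n-2
      have hj4 : j = n-2 := by omega
      subst hj4
      have e1 : n-2+1 = n-1 := by omega
      have e2 : 2*n+3-(n-2) = n+5 := by omega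
      rw [e1, e2, iterR_nm1 n hn, iterR n hn (n-2) (by omega) (by omega), e2, col_np5 n hn,
        ivec_split (2*n+4) (n+2) (n+4) (2*n+3) (by omega) (by omega)]
      abel
  -- assemble
  have ea : n+2 = (j+2)+(n-j) := by omega
  have eb : n+1 = (j+1)+(n-j) := by omega
  have L1 : (Emat n ^ (n+2)).mulVec (ivec (2*n+4) j j)
      = (Emat n ^ (j+2)).mulVec (ivec (2*n+4) 0 (n+2))
        + (Emat n ^ (j+2)).mulVec (ivec (2*n+4) (n+2) (n+2)) := by
    conv_lhs => rw [ea]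
    rw [pow_add, ← Matrix.mulVec_mulVec, st3, Matrix.mulVec_add]
  have L2 : (Emat n ^ (n+1)).mulVec (ivec (2*n+4) j j)
      = (Emat n ^ (j+1)).mulVec (ivec (2*n+4) 0 (n+2))
        + (Emat n ^ (j+1)).mulVec (ivec (2*n+4) (n+2) (n+2)) := by
    conv_lhs => rw [eb]
    rw [pow_add, ← Matrix.mulVec_mulVec, st3, Matrix.mulVec_add]
  rw [L1, L2]
  have hY : ∀ m : ℕ, (Emat n ^ (m+1)).mulVec (ivec (2*n+4) 0 (n+2))
      = (2:ℂ) • (Emat n ^ m).mulVec (ivec (2*n+4) 0 (n+2))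
        + (Emat n ^ m).mulVec (ivec (2*n+4) (2*n+3) (2*n+3)) := by
    intro m
    rw [powStepR, S4 n hn, Matrix.mulVec_add, Matrix.mulVec_smul]
  have hZ : ∀ m : ℕ, (Emat n ^ (m+1)).mulVec (ivec (2*n+4) (n+2) (n+2))
      = (Emat n ^ m).mulVec (ivec (2*n+4) (2*n+3) (2*n+3)) := by
    intro m
    rw [powStepR, col_np2 n hn]
  rw [show j+2 = (j+1)+1 from rfl, hY (j+1), hZ (j+1), hZ j, hc]
  module

lemma case_small (hn : 3 ≤ n) (j : ℕ) (hj : j ≤ n+1) : colGoal n j := by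
  rcases Nat.eq_zero_or_pos j with h0 | h1
  · subst h0; exact case_zero n hn
  rcases Nat.lt_or_ge j (n-1) with h2 | h2
  · exact case_mid n hn j h1 (by omega)
  rcases Nat.eq_or_lt_of_le h2 with h3 | h3
  · have : j = n-1 := by omega
    subst this; exact case_nm1 n hn
  rcases Nat.eq_or_lt_of_le (by omega : n ≤ j) with h4 | h4
  · subst h4; exact case_n n hn
  · have : j = n+1 := by omega
    subst this; exact case_np1 n hn

lemma case_all (hn : 3 ≤ n) (j : ℕ) (hj : j ≤ 2*n+3) : colGoal n j := by
  rcases Nat.lt_or_ge j (n+2) with h | h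
  · exact case_small n hn j (by omega)
  · -- mirror case
    have hm : 2*n+3-j ≤ n+1 := by omega
    have hgoal := case_small n hn (2*n+3-j) hm
    unfold colGoal at hgoal ⊢
    have hJv : (Jmat n).mulVec (ivec (2*n+4) (2*n+3-j) (2*n+3-j)) = ivec (2*n+4) j j := by
      have e : 2*n+3-(2*n+3-j) = j := by omega
      rw [Jmat_col n (2*n+3-j) (by omega), e]
    have hC : Commute (Emat n) (Jmat n) := Emat_Jmat_comm n (by omega)
    have hcomm : ∀ m : ℕ, Emat n ^ m * Jmat n = Jmat n * Emat n ^ m := by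
      intro m
      exact (hC.pow_left m).eq
    have hswap : ∀ (m : ℕ) (v : Fin (2*n+4) → ℂ),
        (Emat n ^ m).mulVec ((Jmat n).mulVec v) = (Jmat n).mulVec ((Emat n ^ m).mulVec v) := by
      intro m v
      rw [Matrix.mulVec_mulVec, Matrix.mulVec_mulVec, hcomm m]
    have happ := congrArg (fun v => (Jmat n).mulVec v) hgoal
    simp only [Matrix.mulVec_add, Matrix.mulVec_smul] at happ
    rw [← hswap (n+2), ← hswap (n+1), hJv] at happ
    have hlast : (Jmat n).mulVec ((Emat n).mulVec (ivec (2*n+4) (2*n+3-(2*n+3-j)) (2*n+3-(2*n+3-j))))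
        = (Emat n).mulVec (ivec (2*n+4) (2*n+3-j) (2*n+3-j)) := by
      have e : 2*n+3-(2*n+3-j) = j := by omega
      have hswap1 : ∀ v : Fin (2*n+4) → ℂ,
          (Emat n).mulVec ((Jmat n).mulVec v) = (Jmat n).mulVec ((Emat n).mulVec v) := by
        intro v
        rw [Matrix.mulVec_mulVec, Matrix.mulVec_mulVec, Emat_Jmat_comm n (by omega)]
      rw [e, ← hswap1, Jmat_col n j (by omega)]
    rw [hlast] at happ
    exact happ

end MainCol

/-! ### assembling the matrix identity -/

lemma eq_of_mulVec_ivec {N : ℕ} {M M' : Matrix (Fin N) (Fin N) ℂ}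
    (h : ∀ j : Fin N, M.mulVec (ivec N j.1 j.1) = M'.mulVec (ivec N j.1 j.1)) : M = M' := by
  ext i j
  have h2 := congrFun (h j) i
  rw [mulVec_ivec_single N M j.1 j.isLt, mulVec_ivec_single N M' j.1 j.isLt] at h2
  simpa using h2

lemma Erel3 (n : ℕ) (hn : 3 ≤ n) :
    Emat n ^ (n+2) = (2:ℂ) • Emat n ^ (n+1) + (2:ℂ) • (Emat n * Jmat n) := by
  apply eq_of_mulVec_ivec
  intro j
  have hg := case_all n hn j.1 (by omega)
  unfold colGoal at hg
  rw [Matrix.add_mulVec, Matrix.smul_mulVec, Matrix.smul_mulVec,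
    ← Matrix.mulVec_mulVec, Jmat_col n j.1 j.isLt]
  exact hg

/-- computable integer model for the small cases -/
def Enmat (n : ℕ) : Matrix (Fin (2*n + 4)) (Fin (2*n + 4)) ℕ :=
  Matrix.of fun i j => if aIdx n (j : ℕ) ≤ (i : ℕ) ∧ (i : ℕ) ≤ bIdx n (j : ℕ) then 1 else 0

def Jnmat (n : ℕ) : Matrix (Fin (2*n + 4)) (Fin (2*n + 4)) ℕ :=
  Matrix.of fun i j => if (i : ℕ) + 1 + ((j : ℕ) + 1) = 2*n + 5 then 1 else 0

lemma Emat_eq_map (n : ℕ) : Emat n = (Enmat n).map (Nat.cast : ℕ → ℂ) := by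
  ext i j
  simp [Emat, Enmat, Matrix.map_apply, apply_ite (Nat.cast : ℕ → ℂ)]

lemma Jmat_eq_map (n : ℕ) : Jmat n = (Jnmat n).map (Nat.cast : ℕ → ℂ) := by
  ext i j
  simp [Jmat, Jnmat, Matrix.map_apply, apply_ite (Nat.cast : ℕ → ℂ)]

lemma Erel_small (n : ℕ) (hn : n = 1 ∨ n = 2) :
    Emat n ^ (n+2) = (2:ℂ) • Emat n ^ (n+1) + (2:ℂ) • (Emat n * Jmat n) := by
  have hN : Enmat n ^ (n+2) = Enmat n ^ (n+1) + Enmat n ^ (n+1)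
      + (Enmat n * Jnmat n + Enmat n * Jnmat n) := by
    rcases hn with h | h <;> subst h <;> decide
  have h := congrArg ((Nat.castRingHom ℂ).mapMatrix :
    Matrix (Fin (2*n+4)) (Fin (2*n+4)) ℕ →+* Matrix (Fin (2*n+4)) (Fin (2*n+4)) ℂ) hN
  simp only [map_pow, map_add, _root_.map_mul] at h
  have hE : (Nat.castRingHom ℂ).mapMatrix (Enmat n) = Emat n := by
    rw [RingHom.mapMatrix_apply, Emat_eq_map]
    rfl
  have hJ : (Nat.castRingHom ℂ).mapMatrix (Jnmat n) = Jmat n := by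
    rw [RingHom.mapMatrix_apply, Jmat_eq_map]
    rfl
  rw [hE, hJ] at h
  rw [h]
  module

lemma Erel (n : ℕ) (hn : 1 ≤ n) :
    Emat n ^ (n+2) = (2:ℂ) • Emat n ^ (n+1) + (2:ℂ) • (Emat n * Jmat n) := by
  obtain h | h | h : n = 1 ∨ n = 2 ∨ 3 ≤ n := by omega
  · exact Erel_small n (Or.inl h)
  · exact Erel_small n (Or.inr h)
  · exact Erel3 n h

theorem Emat_relation (n : ℕ) (hn : 1 ≤ n) :
    Emat n * (Emat n ^ (n+1) - 2 * Emat n ^ n - 2 * Jmat n) = 0 := by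
  have h2 : ∀ M : Matrix (Fin (2*n+4)) (Fin (2*n+4)) ℂ,
      (2 : Matrix (Fin (2*n+4)) (Fin (2*n+4)) ℂ) * M = (2:ℂ) • M := by
    intro M
    exact (two_mul M).trans (two_smul ℂ M).symm
  rw [Matrix.mul_sub, Matrix.mul_sub, h2 (Emat n ^ n), h2 (Jmat n), Matrix.mul_smul, Matrix.mul_smul,
    ← pow_succ', ← pow_succ', Erel n hn]
  module

/-! ### Analysis part: evaluation of the Markov points -/

section Points
variable (n : ℕ) (κ : ℝ)

lemma p_zero : markovPoint n κ 0 = -1 := by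
  simp only [markovPoint, if_pos rfl, if_true]

lemma p_mid (i : ℕ) (h1 : 1 ≤ i) (h2 : i < n) :
    markovPoint n κ i = (2 + 2*κ)^i * κ - 1 := by
  simp only [markovPoint, if_neg (show ¬ (i = 0) by omega), if_pos h2, if_true]

lemma p_n (hn : 1 ≤ n) : markovPoint n κ n = -(1/2) := by
  simp only [markovPoint, if_neg (show ¬ (n = 0) by omega),
    if_neg (show ¬ (n < n) by omega), if_pos rfl, if_true]

lemma p_n1 (hn : 1 ≤ n) : markovPoint n κ (n+1) = -κ := by
  simp only [markovPoint, if_neg (show ¬ (n+1 = 0) by omega),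
    if_neg (show ¬ (n+1 < n) by omega), if_neg (show ¬ (n+1 = n) by omega),
    if_pos rfl, if_true]

lemma p_n2 (hn : 1 ≤ n) : markovPoint n κ (n+2) = 0 := by
  simp only [markovPoint, if_neg (show ¬ (n+2 = 0) by omega),
    if_neg (show ¬ (n+2 < n) by omega), if_neg (show ¬ (n+2 = n) by omega),
    if_neg (show ¬ (n+2 = n+1) by omega), if_pos rfl, if_true]

lemma p_n3 (hn : 1 ≤ n) : markovPoint n κ (n+3) = κ := by
  simp only [markovPoint, if_neg (show ¬ (n+3 = 0) by omega),
    if_neg (show ¬ (n+3 < n) by omega), if_neg (show ¬ (n+3 = n) by omega),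
    if_neg (show ¬ (n+3 = n+1) by omega), if_neg (show ¬ (n+3 = n+2) by omega),
    if_pos rfl, if_true]

lemma p_n4 (hn : 1 ≤ n) : markovPoint n κ (n+4) = 1/2 := by
  simp only [markovPoint, if_neg (show ¬ (n+4 = 0) by omega),
    if_neg (show ¬ (n+4 < n) by omega), if_neg (show ¬ (n+4 = n) by omega),
    if_neg (show ¬ (n+4 = n+1) by omega), if_neg (show ¬ (n+4 = n+2) by omega),
    if_neg (show ¬ (n+4 = n+3) by omega), if_pos rfl, if_true]

lemma p_hi (i : ℕ) (h1 : n+5 ≤ i) (h2 : i < 2*n+4) :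
    markovPoint n κ i = 1 - (2 + 2*κ)^(2*n+4-i) * κ := by
  simp only [markovPoint, if_neg (show ¬ (i = 0) by omega),
    if_neg (show ¬ (i < n) by omega), if_neg (show ¬ (i = n) by omega),
    if_neg (show ¬ (i = n+1) by omega), if_neg (show ¬ (i = n+2) by omega),
    if_neg (show ¬ (i = n+3) by omega), if_neg (show ¬ (i = n+4) by omega),
    if_pos h2, if_true]

lemma p_top (hn : 1 ≤ n) : markovPoint n κ (2*n+4) = 1 := by
  simp only [markovPoint, if_neg (show ¬ (2*n+4 = 0) by omega),
    if_neg (show ¬ (2*n+4 < n) by omega), if_neg (show ¬ (2*n+4 = n) by omega),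
    if_neg (show ¬ (2*n+4 = n+1) by omega), if_neg (show ¬ (2*n+4 = n+2) by omega),
    if_neg (show ¬ (2*n+4 = n+3) by omega), if_neg (show ¬ (2*n+4 = n+4) by omega),
    if_neg (show ¬ (2*n+4 < 2*n+4) by omega), if_true]

lemma key_half (hn : 1 ≤ n) (h0 : 0 < κ) (he : (2 + 2*κ)^n * κ = 1) :
    (2 + 2*κ)^(n-1) * κ < 1/2 := by
  obtain ⟨m, rfl⟩ : ∃ m, n = m+1 := ⟨n-1, by omega⟩
  rw [Nat.add_sub_cancel]
  rw [pow_succ'] at he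
  have hp : 0 < (2 + 2*κ)^m * κ := by positivity
  nlinarith [hp, h0]

lemma p_step (hn : 1 ≤ n) (h0 : 0 < κ) (h2 : κ < 1/2) (he : (2 + 2*κ)^n * κ = 1) :
    ∀ s, s < 2*n+4 → markovPoint n κ s < markovPoint n κ (s+1) := by
  intro s hs
  have hkey := key_half n κ hn h0 he
  obtain c|c|c|c|c|c|c|c|c|c|c|c :
      (s = 0 ∧ n = 1) ∨ (s = 0 ∧ 2 ≤ n) ∨ (1 ≤ s ∧ s ≤ n-2) ∨ (s = n-1 ∧ 2 ≤ n)
      ∨ s = n ∨ s = n+1 ∨ s = n+2 ∨ s = n+3 ∨ (s = n+4 ∧ n = 1) ∨ (s = n+4 ∧ 2 ≤ n)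
      ∨ (n+5 ≤ s ∧ s ≤ 2*n+2) ∨ (s = 2*n+3 ∧ 2 ≤ n) := by omega
  · obtain ⟨rfl, hn1⟩ := c
    rw [p_zero, show (0+1 : ℕ) = n from by omega, p_n n κ hn]
    norm_num
  · obtain ⟨rfl, hn2⟩ := c
    rw [p_zero, show (0+1 : ℕ) = 1 from rfl, p_mid n κ 1 (by omega) (by omega)]
    have : (0:ℝ) < (2 + 2*κ)^1 * κ := by positivity
    linarith
  · obtain ⟨hs1, hs2⟩ := c
    rw [p_mid n κ s (by omega) (by omega), p_mid n κ (s+1) (by omega) (by omega), pow_succ']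
    have hp : 0 < (2 + 2*κ)^s * κ := by positivity
    nlinarith [hp]
  · obtain ⟨rfl, hn2⟩ := c
    rw [p_mid n κ (n-1) (by omega) (by omega), show n-1+1 = n from by omega, p_n n κ hn]
    have e : n - 1 = n - 1 := rfl
    linarith [hkey]
  · rw [c, p_n n κ hn, p_n1 n κ hn]
    linarith
  · subst c
    rw [show n+1+1 = n+2 from rfl, p_n1 n κ hn, p_n2 n κ hn]
    linarith
  · subst c
    rw [show n+2+1 = n+3 from rfl, p_n2 n κ hn, p_n3 n κ hn]
    linarith
  · subst c
    rw [show n+3+1 = n+4 from rfl, p_n3 n κ hn, p_n4 n κ hn]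
    linarith
  · obtain ⟨rfl, hn1⟩ := c
    rw [p_n4 n κ hn, show n+4+1 = 2*n+4 from by omega, p_top n κ hn]
    norm_num
  · obtain ⟨rfl, hn2⟩ := c
    rw [p_n4 n κ hn, show n+4+1 = n+5 from rfl, p_hi n κ (n+5) (by omega) (by omega),
      show 2*n+4-(n+5) = n-1 from by omega]
    linarith [hkey]
  · obtain ⟨hs1, hs2⟩ := c
    rw [p_hi n κ s (by omega) (by omega), p_hi n κ (s+1) (by omega) (by omega),
      show 2*n+4-s = (2*n+4-(s+1))+1 from by omega, pow_succ']
    have hp : 0 < (2 + 2*κ)^(2*n+4-(s+1)) * κ := by positivity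
    nlinarith [hp]
  · obtain ⟨rfl, hn2⟩ := c
    rw [p_hi n κ (2*n+3) (by omega) (by omega), show 2*n+3+1 = 2*n+4 from rfl, p_top n κ hn,
      show 2*n+4-(2*n+3) = 1 from by omega]
    have : (0:ℝ) < (2 + 2*κ)^1 * κ := by positivity
    linarith

lemma p_mono (hn : 1 ≤ n) (h0 : 0 < κ) (h2 : κ < 1/2) (he : (2 + 2*κ)^n * κ = 1) :
    ∀ t, t ≤ 2*n+4 → ∀ s, s < t → markovPoint n κ s < markovPoint n κ t := by
  intro t
  induction t with
  | zero => omega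
  | succ t ih =>
    intro ht s hs
    rcases Nat.lt_or_ge s t with h | h
    · exact lt_trans (ih (by omega) s h) (p_step n κ hn h0 h2 he t (by omega))
    · have : s = t := by omega
      subst this
      exact p_step n κ hn h0 h2 he s (by omega)

lemma p_le_iff (hn : 1 ≤ n) (h0 : 0 < κ) (h2 : κ < 1/2) (he : (2 + 2*κ)^n * κ = 1)
    (s t : ℕ) (hs : s ≤ 2*n+4) (ht : t ≤ 2*n+4) :
    markovPoint n κ s ≤ markovPoint n κ t ↔ s ≤ t := by
  constructor
  · intro h
    by_contra hc
    exact absurd (p_mono n κ hn h0 h2 he s hs t (by omega)) (by linarith)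
  · intro h
    rcases Nat.eq_or_lt_of_le h with rfl | hlt
    · exact le_refl _
    · exact le_of_lt (p_mono n κ hn h0 h2 he t ht s hlt)
end Points

/-! ### images of intervals under the tent map -/

lemma image_affine_pos (c d a b : ℝ) (hc : 0 < c) :
    ((fun x => c*x + d) '' Set.Ioo a b) = Set.Ioo (c*a+d) (c*b+d) := by
  have hne : c ≠ 0 := ne_of_gt hc
  ext y
  constructor
  · rintro ⟨x, hx, rfl⟩
    refine ⟨show c*a+d < c*x+d from ?_, show c*x+d < c*b+d from ?_⟩ <;>
      nlinarith [hx.1, hx.2]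
  · rintro ⟨h1, h2⟩
    refine ⟨(y-d)/c, ⟨?_, ?_⟩, show c*((y-d)/c)+d = y from by field_simp; ring⟩
    · rw [lt_div_iff₀ hc]; nlinarith
    · rw [div_lt_iff₀ hc]; nlinarith

lemma image_affine_neg (c d a b : ℝ) (hc : c < 0) :
    ((fun x => c*x + d) '' Set.Ioo a b) = Set.Ioo (c*b+d) (c*a+d) := by
  have hne : c ≠ 0 := ne_of_lt hc
  ext y
  constructor
  · rintro ⟨x, hx, rfl⟩
    refine ⟨show c*b+d < c*x+d from ?_, show c*x+d < c*a+d from ?_⟩ <;>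
      nlinarith [hx.1, hx.2]
  · rintro ⟨h1, h2⟩
    refine ⟨(y-d)/c, ⟨?_, ?_⟩, show c*((y-d)/c)+d = y from by field_simp; ring⟩
    · rw [lt_div_iff_of_neg hc]; nlinarith
    · rw [div_lt_iff_of_neg hc]; nlinarith

lemma imgB1 (κ a b : ℝ) (h0 : 0 < κ) (hb : b ≤ -(1/2)) :
    pairedTent κ '' Set.Ioo a b = Set.Ioo (2*(1+κ)*a + (2*κ+1)) (2*(1+κ)*b + (2*κ+1)) := by
  have h : pairedTent κ '' Set.Ioo a b = (fun x => 2*(1+κ)*x + (2*κ+1)) '' Set.Ioo a b := by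
    apply Set.image_congr
    intro x hx
    unfold pairedTent
    rw [if_pos (by linarith [hx.2] : x ≤ -(1/2))]
    ring
  rw [h, image_affine_pos _ _ _ _ (by linarith)]

lemma imgB2 (κ a b : ℝ) (h0 : 0 < κ) (ha : -(1/2) ≤ a) (hb : b ≤ 0) :
    pairedTent κ '' Set.Ioo a b
      = Set.Ioo (-(2*(1+κ))*b + (-1)) (-(2*(1+κ))*a + (-1)) := by
  have h : pairedTent κ '' Set.Ioo a b = (fun x => -(2*(1+κ))*x + (-1)) '' Set.Ioo a b := by
    apply Set.image_congr
    intro x hx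
    unfold pairedTent
    rw [if_neg (by push_neg; linarith [hx.1] : ¬ x ≤ -(1/2)), if_pos (by linarith [hx.2])]
    ring
  rw [h, image_affine_neg _ _ _ _ (by linarith)]

lemma imgB4 (κ a b : ℝ) (h0 : 0 < κ) (ha : 0 ≤ a) (hb : b ≤ 1/2) :
    pairedTent κ '' Set.Ioo a b
      = Set.Ioo (-(2*(1+κ))*b + 1) (-(2*(1+κ))*a + 1) := by
  have h : pairedTent κ '' Set.Ioo a b = (fun x => -(2*(1+κ))*x + 1) '' Set.Ioo a b := by
    apply Set.image_congr
    intro x hx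
    unfold pairedTent
    rw [if_neg (by push_neg; linarith [hx.1] : ¬ x ≤ -(1/2)),
      if_neg (by push_neg; linarith [hx.1] : ¬ x < 0),
      if_neg (show ¬ x = 0 by intro hc; subst hc; exact absurd hx.1 (by linarith)),
      if_pos (by linarith [hx.2] : x ≤ 1/2)]
  rw [h, image_affine_neg _ _ _ _ (by linarith)]

lemma imgB5 (κ a b : ℝ) (h0 : 0 < κ) (ha : 1/2 ≤ a) :
    pairedTent κ '' Set.Ioo a b
      = Set.Ioo (2*(1+κ)*a + (1-2*(1+κ))) (2*(1+κ)*b + (1-2*(1+κ))) := by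
  have h : pairedTent κ '' Set.Ioo a b = (fun x => 2*(1+κ)*x + (1-2*(1+κ))) '' Set.Ioo a b := by
    apply Set.image_congr
    intro x hx
    unfold pairedTent
    rw [if_neg (by push_neg; linarith [hx.1] : ¬ x ≤ -(1/2)),
      if_neg (by push_neg; linarith [hx.1] : ¬ x < 0),
      if_neg (show ¬ x = 0 by intro hc; subst hc; exact absurd hx.1 (by linarith)),
      if_neg (by push_neg; linarith [hx.1] : ¬ x ≤ 1/2)]
    ring
  rw [h, image_affine_pos _ _ _ _ (by linarith)]

section ImageEq
variable (n : ℕ) (κ : ℝ)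

set_option maxHeartbeats 2000000 in
lemma image_eq (hn : 1 ≤ n) (h0 : 0 < κ) (h2 : κ < 1/2) (he : (2 + 2*κ)^n * κ = 1) :
    ∀ j, j < 2*n+4 →
    pairedTent κ '' Set.Ioo (markovPoint n κ j) (markovPoint n κ (j+1))
      = Set.Ioo (markovPoint n κ (aIdx n j)) (markovPoint n κ (bIdx n j + 1)) := by
  have hm := p_mono n κ hn h0 h2 he
  have hB1pre : ∀ m, 1 ≤ m → m ≤ n → markovPoint n κ m ≤ -(1/2) := by
    intro m h1 hmn
    rcases Nat.eq_or_lt_of_le hmn with heq | hlt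
    · rw [heq, p_n n κ hn]
    · have := hm n (by omega) m hlt
      rw [p_n n κ hn] at this
      linarith
  have hB5pre : ∀ m, n+4 ≤ m → m ≤ 2*n+4 → 1/2 ≤ markovPoint n κ m := by
    intro m h1 hm2
    rcases Nat.eq_or_lt_of_le h1 with heq | hlt
    · rw [← heq, p_n4 n κ hn]
    · have := hm m hm2 (n+4) hlt
      rw [p_n4 n κ hn] at this
      linarith
  intro j hj
  obtain c|c|c|c|c|c|c|c|c|c|c|c|c|c|c|c|c|c|c|c :
      (j = 0 ∧ n = 1) ∨ (j = 0 ∧ n = 2) ∨ (j = 0 ∧ 3 ≤ n) ∨ (1 ≤ j ∧ j ≤ n-3)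
      ∨ (j = n-2 ∧ 3 ≤ n) ∨ (j = n-1 ∧ 2 ≤ n) ∨ (j = n ∧ 2 ≤ n) ∨ (j = n ∧ n = 1)
      ∨ (j = n+1 ∧ 2 ≤ n) ∨ (j = n+1 ∧ n = 1) ∨ (j = n+2 ∧ 2 ≤ n) ∨ (j = n+2 ∧ n = 1)
      ∨ (j = n+3 ∧ 2 ≤ n) ∨ (j = n+3 ∧ n = 1) ∨ (j = n+4 ∧ n = 1) ∨ (j = n+4 ∧ 2 ≤ n)
      ∨ (j = n+5 ∧ 3 ≤ n) ∨ (n+6 ≤ j ∧ j ≤ 2*n+2) ∨ (j = 2*n+3 ∧ n = 2)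
      ∨ (j = 2*n+3 ∧ 3 ≤ n) := by omega
  · -- D1 : j = 0, n = 1
    obtain ⟨hj0, hn1⟩ := c
    subst hn1; subst hj0
    have q1 : markovPoint 1 κ 1 = -(1/2) := p_n 1 κ (le_refl 1)
    rw [show aIdx 1 0 = 0 from rfl, show bIdx 1 0 + 1 = 4 from rfl,
      show markovPoint 1 κ (0+1) = -(1/2) from q1,
      imgB1 κ _ _ h0 (le_refl _), p_zero 1 κ,
      show markovPoint 1 κ 4 = κ from p_n3 1 κ (le_refl 1)]
    exact congrArg₂ Set.Ioo (by ring) (by ring)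
  · -- D2 : j = 0, n = 2
    obtain ⟨hj0, hn2⟩ := c
    subst hn2; subst hj0
    have hpre := hB1pre 1 (by omega) (by omega)
    rw [show markovPoint 2 κ 1 = (2+2*κ)^1*κ-1 from p_mid 2 κ 1 (by omega) (by omega)] at hpre
    rw [show aIdx 2 0 = 0 from rfl, show bIdx 2 0 + 1 = 4 from rfl,
      show markovPoint 2 κ (0+1) = (2+2*κ)^1*κ - 1 from p_mid 2 κ 1 (by omega) (by omega),
      imgB1 κ _ _ h0 hpre,
      p_zero 2 κ, show markovPoint 2 κ 4 = 0 from p_n2 2 κ (by omega)]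
    exact congrArg₂ Set.Ioo (by ring) (by linear_combination he)
  · -- D3 : j = 0, 3 ≤ n
    obtain ⟨rfl, hn3⟩ := c
    have hpre := hB1pre 1 (by omega) (by omega)
    rw [p_mid n κ 1 (by omega) (by omega)] at hpre
    rw [aIdx_zero n hn3, bIdx_zero n hn3,
      show markovPoint n κ (0+1) = (2+2*κ)^1*κ - 1 from p_mid n κ 1 (by omega) (by omega),
      imgB1 κ _ _ h0 hpre,
      p_zero n κ, show (1:ℕ)+1 = 2 from rfl, p_mid n κ 2 (by omega) (by omega)]
    exact congrArg₂ Set.Ioo (by ring) (by ring)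
  · -- D4 : 1 ≤ j ≤ n-3
    obtain ⟨h1, h3⟩ := c
    rw [aIdx_lo n j (by omega) h1 h3, bIdx_lo n j (by omega) h1 h3,
      p_mid n κ (j+1) (by omega) (by omega)]
    have hpre := hB1pre (j+1) (by omega) (by omega)
    rw [p_mid n κ (j+1) (by omega) (by omega)] at hpre
    rw [imgB1 κ _ _ h0 hpre,
      p_mid n κ j (by omega) (by omega),
      p_mid n κ (j+1+1) (by omega) (by omega)]
    refine congrArg₂ Set.Ioo ?_ ?_
    · rw [pow_succ' (2+2*κ) j]; ring
    · rw [pow_succ' (2+2*κ) (j+1)]; ring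
  · -- D5 : j = n-2, 3 ≤ n
    obtain ⟨rfl, hn3⟩ := c
    rw [aIdx_nm2 n hn3, bIdx_nm2 n hn3, show n+1+1 = n+2 from rfl,
      show n-2+1 = n-1 from by omega,
      p_mid n κ (n-1) (by omega) (by omega)]
    have hpre := hB1pre (n-1) (by omega) (by omega)
    rw [p_mid n κ (n-1) (by omega) (by omega)] at hpre
    rw [imgB1 κ _ _ h0 hpre,
      p_mid n κ (n-2) (by omega) (by omega), p_n2 n κ hn]
    rw [show n = (n-1)+1 from by omega, pow_succ'] at he
    refine congrArg₂ Set.Ioo ?_ ?_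
    · rw [show n-1 = (n-2)+1 from by omega, pow_succ']; ring
    · linear_combination he
  · -- D6 : j = n-1, 2 ≤ n
    obtain ⟨rfl, hn2⟩ := c
    rw [aIdx_nm1 n hn2, bIdx_nm1 n hn2, show n+2+1 = n+3 from rfl,
      show n-1+1 = n from by omega,
      imgB1 κ _ _ h0 (by rw [p_n n κ hn]),
      p_mid n κ (n-1) (by omega) (by omega), p_n n κ hn, p_n2 n κ hn, p_n3 n κ hn]
    rw [show n = (n-1)+1 from by omega, pow_succ'] at he
    exact congrArg₂ Set.Ioo (by linear_combination he) (by ring)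
  · -- D7 : j = n, 2 ≤ n
    obtain ⟨hjn, hn2⟩ := c
    rw [hjn, aIdx_nn n hn2, bIdx_nn n hn2, show n+2+1 = n+3 from rfl,
      imgB2 κ _ _ h0 (le_of_eq (p_n n κ hn).symm) (by rw [p_n1 n κ hn]; linarith),
      p_n n κ hn, p_n1 n κ hn, p_mid n κ 1 (by omega) (by omega), p_n3 n κ hn]
    exact congrArg₂ Set.Ioo (by ring) (by ring)
  · -- D8 : j = n, n = 1
    obtain ⟨hjn, hn1⟩ := c
    subst hn1; subst hjn
    have q2 : markovPoint 1 κ 2 = -κ := p_n1 1 κ (le_refl 1)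
    rw [show aIdx 1 1 = 3 from rfl, show bIdx 1 1 + 1 = 4 from rfl,
      show markovPoint 1 κ (1+1) = -κ from q2,
      imgB2 κ _ _ h0 (le_of_eq (p_n 1 κ (le_refl 1)).symm) (by linarith),
      p_n 1 κ (le_refl 1),
      show markovPoint 1 κ 3 = 0 from p_n2 1 κ (le_refl 1),
      show markovPoint 1 κ 4 = κ from p_n3 1 κ (le_refl 1)]
    rw [pow_one] at he
    exact congrArg₂ Set.Ioo (by linear_combination he) (by ring)
  · -- D9 : j = n+1, 2 ≤ n
    obtain ⟨rfl, hn2⟩ := c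
    rw [aIdx_np1 n hn2, bIdx_np1 n hn2, show n+1+1 = n+2 from rfl,
      show (0:ℕ)+1 = 1 from rfl,
      imgB2 κ _ _ h0 (by rw [p_n1 n κ hn]; linarith) (le_of_eq (p_n2 n κ hn)),
      p_n1 n κ hn, p_n2 n κ hn, p_zero n κ, p_mid n κ 1 (by omega) (by omega)]
    exact congrArg₂ Set.Ioo (by ring) (by ring)
  · -- D10 : j = n+1, n = 1
    obtain ⟨hj2, hn1⟩ := c
    subst hn1; subst hj2
    have q2 : markovPoint 1 κ 2 = -κ := p_n1 1 κ (le_refl 1)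
    have q3 : markovPoint 1 κ 3 = 0 := p_n2 1 κ (le_refl 1)
    rw [show aIdx 1 (1+1) = 0 from rfl, show bIdx 1 (1+1) + 1 = 3 from rfl,
      show markovPoint 1 κ (1+1) = -κ from q2,
      show markovPoint 1 κ (1+1+1) = 0 from q3,
      imgB2 κ _ _ h0 (by linarith) (le_refl _),
      p_zero 1 κ]
    rw [pow_one] at he
    exact congrArg₂ Set.Ioo (by ring) (by linear_combination he)
  · -- D11 : j = n+2, 2 ≤ n
    obtain ⟨rfl, hn2⟩ := c
    rw [aIdx_np2 n hn2, bIdx_np2 n hn2, show n+2+1 = n+3 from rfl,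
      show 2*n+3+1 = 2*n+4 from rfl,
      imgB4 κ _ _ h0 (le_of_eq (p_n2 n κ hn).symm) (by rw [p_n3 n κ hn]; linarith),
      p_n2 n κ hn, p_n3 n κ hn,
      p_hi n κ (2*n+3) (by omega) (by omega), show 2*n+4-(2*n+3) = 1 from by omega,
      p_top n κ hn]
    exact congrArg₂ Set.Ioo (by ring) (by ring)
  · -- D12 : j = n+2, n = 1
    obtain ⟨hj3, hn1⟩ := c
    subst hn1; subst hj3
    have q3 : markovPoint 1 κ 3 = 0 := p_n2 1 κ (le_refl 1)
    have q4 : markovPoint 1 κ 4 = κ := p_n3 1 κ (le_refl 1)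
    rw [show aIdx 1 (1+2) = 3 from rfl, show bIdx 1 (1+2) + 1 = 6 from rfl,
      show markovPoint 1 κ (1+2) = 0 from q3,
      show markovPoint 1 κ (1+2+1) = κ from q4,
      imgB4 κ _ _ h0 (le_refl _) (by linarith),
      show markovPoint 1 κ 6 = 1 from p_top 1 κ (le_refl 1)]
    rw [pow_one] at he
    exact congrArg₂ Set.Ioo (by linear_combination -he) (by ring)
  · -- D13 : j = n+3, 2 ≤ n
    obtain ⟨rfl, hn2⟩ := c
    rw [aIdx_np3 n hn2, bIdx_np3 n hn2, show n+3+1 = n+4 from rfl,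
      show 2*n+2+1 = 2*n+3 from rfl,
      imgB4 κ _ _ h0 (by rw [p_n3 n κ hn]; linarith) (le_of_eq (p_n4 n κ hn)),
      p_n3 n κ hn, p_n4 n κ hn, p_n1 n κ hn,
      p_hi n κ (2*n+3) (by omega) (by omega), show 2*n+4-(2*n+3) = 1 from by omega]
    exact congrArg₂ Set.Ioo (by ring) (by ring)
  · -- D14 : j = n+3, n = 1
    obtain ⟨hj4, hn1⟩ := c
    subst hn1; subst hj4
    have q2 : markovPoint 1 κ 2 = -κ := p_n1 1 κ (le_refl 1)
    have q3 : markovPoint 1 κ 3 = 0 := p_n2 1 κ (le_refl 1)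
    have q4 : markovPoint 1 κ 4 = κ := p_n3 1 κ (le_refl 1)
    have q5 : markovPoint 1 κ 5 = 1/2 := p_n4 1 κ (le_refl 1)
    rw [show aIdx 1 (1+3) = 2 from rfl, show bIdx 1 (1+3) + 1 = 3 from rfl,
      show markovPoint 1 κ (1+3) = κ from q4,
      show markovPoint 1 κ (1+3+1) = 1/2 from q5,
      imgB4 κ _ _ h0 (by linarith) (le_refl _),
      q2, q3]
    rw [pow_one] at he
    exact congrArg₂ Set.Ioo (by ring) (by linear_combination -he)
  · -- D15 : j = n+4, n = 1
    obtain ⟨hj5, hn1⟩ := c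
    subst hn1; subst hj5
    have q2 : markovPoint 1 κ 2 = -κ := p_n1 1 κ (le_refl 1)
    have q5 : markovPoint 1 κ 5 = 1/2 := p_n4 1 κ (le_refl 1)
    have q6 : markovPoint 1 κ 6 = 1 := p_top 1 κ (le_refl 1)
    rw [show aIdx 1 (1+4) = 2 from rfl, show bIdx 1 (1+4) + 1 = 6 from rfl,
      show markovPoint 1 κ (1+4) = 1/2 from q5,
      show markovPoint 1 κ (1+4+1) = 1 from q6,
      imgB5 κ _ _ h0 (le_refl _), q2]
    exact congrArg₂ Set.Ioo (by ring) (by ring)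
  · -- D16 : j = n+4, 2 ≤ n
    obtain ⟨rfl, hn2⟩ := c
    rw [aIdx_np4 n hn2, bIdx_np4 n hn2, show n+4+1 = n+5 from rfl,
      show n+1+1 = n+2 from rfl,
      imgB5 κ _ _ h0 (le_of_eq (p_n4 n κ hn).symm),
      p_n4 n κ hn, p_n1 n κ hn, p_n2 n κ hn,
      p_hi n κ (n+5) (by omega) (by omega), show 2*n+4-(n+5) = n-1 from by omega]
    rw [show n = (n-1)+1 from by omega, pow_succ'] at he
    exact congrArg₂ Set.Ioo (by ring) (by linear_combination -he)
  · -- D17 : j = n+5, 3 ≤ n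
    obtain ⟨rfl, hn3⟩ := c
    rw [aIdx_np5 n hn3, bIdx_np5 n hn3, show n+5+1 = n+6 from rfl,
      show n+4+1 = n+5 from rfl,
      imgB5 κ _ _ h0 (hB5pre (n+5) (by omega) (by omega)),
      p_n2 n κ hn,
      p_hi n κ (n+5) (by omega) (by omega), show 2*n+4-(n+5) = n-1 from by omega,
      p_hi n κ (n+6) (by omega) (by omega), show 2*n+4-(n+6) = n-2 from by omega]
    rw [show n = (n-1)+1 from by omega, pow_succ'] at he
    refine congrArg₂ Set.Ioo ?_ ?_
    · linear_combination -he
    · rw [show n-1 = (n-2)+1 from by omega, pow_succ']; ring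
  · -- D18 : n+6 ≤ j ≤ 2n+2
    obtain ⟨h1, h3⟩ := c
    rw [aIdx_hi n j (by omega) h1 h3, bIdx_hi n j (by omega) h1 h3,
      show j-1+1 = j from by omega,
      imgB5 κ _ _ h0 (hB5pre j (by omega) (by omega)),
      p_hi n κ j (by omega) (by omega),
      p_hi n κ (j+1) (by omega) (by omega),
      p_hi n κ (j-1) (by omega) (by omega)]
    refine congrArg₂ Set.Ioo ?_ ?_
    · rw [show 2*n+4-(j-1) = (2*n+4-j)+1 from by omega, pow_succ']; ring
    · rw [show 2*n+4-j = (2*n+4-(j+1))+1 from by omega, pow_succ']; ring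
  · -- D19 : j = 2n+3, n = 2
    obtain ⟨hj7, hn2⟩ := c
    subst hn2; subst hj7
    have q7 : markovPoint 2 κ 7 = 1 - (2+2*κ)^1*κ := by
      have h := p_hi 2 κ 7 (by omega) (by omega)
      rwa [show 2*2+4-7 = 1 from by omega] at h
    have q8 : markovPoint 2 κ 8 = 1 := p_top 2 κ (by omega)
    have q4 : markovPoint 2 κ 4 = 0 := p_n2 2 κ (by omega)
    rw [show aIdx 2 (2*2+3) = 4 from rfl, show bIdx 2 (2*2+3) + 1 = 8 from rfl,
      show markovPoint 2 κ (2*2+3) = 1 - (2+2*κ)^1*κ from q7,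
      show markovPoint 2 κ (2*2+3+1) = 1 from q8,
      imgB5 κ _ _ h0 (by rw [← q7]; exact hB5pre 7 (by omega) (by omega)),
      q4]
    exact congrArg₂ Set.Ioo (by linear_combination -he) (by ring)
  · -- D20 : j = 2n+3, 3 ≤ n
    obtain ⟨rfl, hn3⟩ := c
    rw [aIdx_top n hn3, bIdx_top n hn3, show 2*n+3+1 = 2*n+4 from rfl,
      imgB5 κ _ _ h0 (hB5pre (2*n+3) (by omega) (by omega)),
      p_top n κ hn,
      p_hi n κ (2*n+3) (by omega) (by omega), show 2*n+4-(2*n+3) = 1 from by omega,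
      p_hi n κ (2*n+2) (by omega) (by omega), show 2*n+4-(2*n+2) = 2 from by omega]
    exact congrArg₂ Set.Ioo (by ring) (by ring)
end ImageEq

/-! ### the entry characterization and the main theorem -/

lemma entry_iff (n : ℕ) (κ : ℝ) (hn : 1 ≤ n) (h0 : 0 < κ) (h2 : κ < 1/2)
    (he : (2 + 2*κ)^n * κ = 1) (i j : Fin (2*n+4)) :
    (markovInterval n κ ((i:ℕ)+1) ⊆ pairedTent κ '' markovInterval n κ ((j:ℕ)+1))
      ↔ (aIdx n (j:ℕ) ≤ (i:ℕ) ∧ (i:ℕ) ≤ bIdx n (j:ℕ)) := by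
  have hi : (i:ℕ) < 2*n+4 := i.isLt
  have hj : (j:ℕ) < 2*n+4 := j.isLt
  obtain ⟨hb1, hb2⟩ := idx_bnd n (j:ℕ) hn (by omega)
  unfold markovInterval
  rw [Nat.add_sub_cancel, Nat.add_sub_cancel,
    image_eq n κ hn h0 h2 he (j:ℕ) hj,
    Set.Ioo_subset_Ioo_iff (p_step n κ hn h0 h2 he (i:ℕ) hi),
    p_le_iff n κ hn h0 h2 he (aIdx n (j:ℕ)) (i:ℕ) (by omega) (by omega),
    p_le_iff n κ hn h0 h2 he ((i:ℕ)+1) (bIdx n (j:ℕ)+1) (by omega) (by omega)]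
  omega

lemma Amat_eq_Emat (n : ℕ) (κ : ℝ) (hn : 1 ≤ n) (h0 : 0 < κ) (h2 : κ < 1/2)
    (he : (2 + 2*κ)^n * κ = 1) : Amat n κ = Emat n := by
  ext i j
  simp only [Amat, Emat, Matrix.of_apply]
  by_cases h : aIdx n (j:ℕ) ≤ (i:ℕ) ∧ (i:ℕ) ≤ bIdx n (j:ℕ)
  · rw [if_pos ((entry_iff n κ hn h0 h2 he i j).mpr h), if_pos h]
  · rw [if_neg (fun hc => h ((entry_iff n κ hn h0 h2 he i j).mp hc)), if_neg h]

/-- For every `n ≥ 1` (with `κ_n` the unique `κ ∈ (0,1/2)` satisfying `(2+2κ)^n κ = 1`),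
`A_n` and `J_n` commute, and `A_n (A_n^{n+1} - 2A_n^n - 2J_n) = 0`. -/
theorem Amat_Jmat_relation (n : ℕ) (hn : 1 ≤ n) (κ : ℝ)
    (hκ : κ ∈ Set.Ioo (0 : ℝ) (1/2)) (heq : (2 + 2*κ)^n * κ = 1) :
    Amat n κ * Jmat n = Jmat n * Amat n κ ∧
    Amat n κ * ((Amat n κ) ^ (n + 1) - 2 * (Amat n κ) ^ n - 2 * Jmat n) = 0 := by
  have hA := Amat_eq_Emat n κ hn hκ.1 hκ.2 heq
  rw [hA]
  exact ⟨Emat_Jmat_comm n hn, Emat_relation n hn⟩
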